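/- arXiv:1704.08425 — 6 statements merged into one kernel-verified Lean document; each statement's English description precedes it below -/
import Mathlib

section
/- Low-frequency L∞ bound via LMI (sufficiency direction of Theorem 2): Let 0 < ν < 2, φ = (π/2)(ν−1), δ > 0, ω_L > 0, and let A ∈ ℝ^{n×n}, B ∈ ℝ^{n×m}, C ∈ ℝ^{p×n}, D ∈ ℝ^{p×m}. Suppose there exist Hermitian matrices U, V ∈ ℂ^{n×n} with V positive definite such that, with X = e^{iφ}AᵀU and Y = −BᵀVA + e^{iφ}BᵀU, the Hermitian block matrix [[Sym(X) − AᵀVA + ω_L^{2ν}V, Y*, Cᵀ],[Y, −δI_m − BᵀVB, Dᵀ],[C, D, −δI_p]] is negative definite. Then for every ω ∈ [0, ω_L], the matrix ω^ν e^{iπν/2} I_n − A is invertible and σmax(C(ω^ν e^{iπν/2} I_n − A)^{−1}B + D) < δ. -/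
open Matrix Complex
open scoped Matrix Kronecker ComplexOrder

/-- The largest singular value (ℓ² operator norm) of a complex matrix. -/
noncomputable def sigmaMax {m n : ℕ} (M : Matrix (Fin m) (Fin n) ℂ) : ℝ :=
  ‖LinearMap.toContinuousLinearMap (Matrix.toEuclideanLin M)‖

/-- A real matrix regarded as a complex matrix. -/
noncomputable def cmap {a b : ℕ} (M : Matrix (Fin a) (Fin b) ℝ) : Matrix (Fin a) (Fin b) ℂ :=
  M.map Complex.ofReal

/-- ρ(θ, M) = [θ,1]* M [θ,1], real-valued for Hermitian M. -/
noncomputable def rho (θ : ℂ) (M : Matrix (Fin 2) (Fin 2) ℂ) : ℝ :=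
  (star ![θ, 1] ⬝ᵥ M *ᵥ ![θ, 1]).re

/-- Δ₀ = [[0, e^{iφ}],[e^{−iφ}, 0]]. -/
noncomputable def Delta0 (φ : ℝ) : Matrix (Fin 2) (Fin 2) ℂ :=
  !![0, Complex.exp ((φ : ℂ) * Complex.I);
     Complex.exp (-(φ : ℂ) * Complex.I), 0]

/-- Σ₀ = [[α, β e^{iφ}],[β e^{−iφ}, γ]]. -/
noncomputable def Sigma0 (φ α β γ : ℝ) : Matrix (Fin 2) (Fin 2) ℂ :=
  !![(α : ℂ), (β : ℂ) * Complex.exp ((φ : ℂ) * Complex.I);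
     (β : ℂ) * Complex.exp (-(φ : ℂ) * Complex.I), (γ : ℂ)]

/-- A 3×3 block matrix. -/
noncomputable def block3 {n m p : ℕ}
    (A11 : Matrix (Fin n) (Fin n) ℂ) (A12 : Matrix (Fin n) (Fin m) ℂ)
    (A13 : Matrix (Fin n) (Fin p) ℂ)
    (A21 : Matrix (Fin m) (Fin n) ℂ) (A22 : Matrix (Fin m) (Fin m) ℂ)
    (A23 : Matrix (Fin m) (Fin p) ℂ)
    (A31 : Matrix (Fin p) (Fin n) ℂ) (A32 : Matrix (Fin p) (Fin m) ℂ)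
    (A33 : Matrix (Fin p) (Fin p) ℂ) :
    Matrix ((Fin n ⊕ Fin m) ⊕ Fin p) ((Fin n ⊕ Fin m) ⊕ Fin p) ℂ :=
  Matrix.fromBlocks (Matrix.fromBlocks A11 A12 A21 A22)
    (Matrix.fromRows A13 A23) (Matrix.fromCols A31 A32) A33

lemma cmap_conjTranspose {k l : ℕ} (M : Matrix (Fin k) (Fin l) ℝ) :
    (cmap M)ᵀ = (cmap M)ᴴ := by
  ext i j
  simp [cmap, Matrix.conjTranspose_apply, Matrix.transpose_apply]

lemma dp_conjT {k l : ℕ} (M : Matrix (Fin k) (Fin l) ℂ) (a : Fin l → ℂ) (b : Fin k → ℂ) :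
    star a ⬝ᵥ (Mᴴ *ᵥ b) = star (M *ᵥ a) ⬝ᵥ b := by
  rw [Matrix.dotProduct_mulVec, ← Matrix.star_mulVec]

lemma dp_conjT' {k l : ℕ} (M : Matrix (Fin k) (Fin l) ℂ) (a : Fin k → ℂ) (b : Fin l → ℂ) :
    star b ⬝ᵥ (Mᴴ *ᵥ a) = star (star a ⬝ᵥ (M *ᵥ b)) := by
  rw [dp_conjT, Matrix.star_dotProduct]

lemma block3_quad {n m p : ℕ}
    (M11 : Matrix (Fin n) (Fin n) ℂ) (M12 : Matrix (Fin n) (Fin m) ℂ)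
    (M13 : Matrix (Fin n) (Fin p) ℂ)
    (M21 : Matrix (Fin m) (Fin n) ℂ) (M22 : Matrix (Fin m) (Fin m) ℂ)
    (M23 : Matrix (Fin m) (Fin p) ℂ)
    (M31 : Matrix (Fin p) (Fin n) ℂ) (M32 : Matrix (Fin p) (Fin m) ℂ)
    (M33 : Matrix (Fin p) (Fin p) ℂ)
    (x : Fin n → ℂ) (u : Fin m → ℂ) (w : Fin p → ℂ) :
    star (Sum.elim (Sum.elim x u) w) ⬝ᵥ
      ((block3 M11 M12 M13 M21 M22 M23 M31 M32 M33) *ᵥ (Sum.elim (Sum.elim x u) w)) =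
      (star x ⬝ᵥ (M11 *ᵥ x) + star x ⬝ᵥ (M12 *ᵥ u) + star x ⬝ᵥ (M13 *ᵥ w))
      + (star u ⬝ᵥ (M21 *ᵥ x) + star u ⬝ᵥ (M22 *ᵥ u) + star u ⬝ᵥ (M23 *ᵥ w))
      + (star w ⬝ᵥ (M31 *ᵥ x) + star w ⬝ᵥ (M32 *ᵥ u) + star w ⬝ᵥ (M33 *ᵥ w)) := by
  simp [block3, Matrix.fromBlocks_mulVec, Matrix.fromRows_mulVec,
    Matrix.fromCols_mulVec_sumElim, Function.star_sumElim,
    sumElim_dotProduct_sumElim, dotProduct_add]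
  ring

lemma inner_eq_dp {k : ℕ} (v w : Fin k → ℂ) :
    (inner ℂ ((WithLp.equiv 2 (Fin k → ℂ)).symm v) ((WithLp.equiv 2 (Fin k → ℂ)).symm w) : ℂ)
      = star v ⬝ᵥ w := by
  simp [PiLp.inner_apply, dotProduct, RCLike.inner_apply, mul_comm]

lemma dp_self_norm {k : ℕ} (v : Fin k → ℂ) :
    (star v ⬝ᵥ v).re = ‖(WithLp.equiv 2 (Fin k → ℂ)).symm v‖ ^ 2 := by
  rw [← inner_eq_dp]
  exact inner_self_eq_norm_sq (𝕜 := ℂ) _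

lemma opNorm_lt_of_forall {m p : ℕ}
    (L : EuclideanSpace ℂ (Fin m) →L[ℂ] EuclideanSpace ℂ (Fin p)) {δ : ℝ} (hδ : 0 < δ)
    (h : ∀ u : EuclideanSpace ℂ (Fin m), u ≠ 0 → ‖L u‖ < δ * ‖u‖) : ‖L‖ < δ := by
  rcases Nat.eq_zero_or_pos m with hm | hm
  · have hL : L = 0 := by
      ext u
      have : u = 0 := by
        subst hm
        exact Subsingleton.elim (α := EuclideanSpace ℂ (Fin 0)) u 0
      simp [this]
    rw [hL]
    simpa using hδ
  · have hne : (Metric.sphere (0 : EuclideanSpace ℂ (Fin m)) 1).Nonempty := by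
      refine ⟨EuclideanSpace.single ⟨0, hm⟩ 1, ?_⟩
      simp [EuclideanSpace.norm_single]
    obtain ⟨u₀, hu₀s, hmax⟩ := (isCompact_sphere (0 : EuclideanSpace ℂ (Fin m)) 1).exists_isMaxOn
      hne (L.continuous.norm.continuousOn)
    have hu₀ : ‖u₀‖ = 1 := mem_sphere_zero_iff_norm.mp hu₀s
    have hbound : ∀ u, ‖L u‖ ≤ ‖L u₀‖ * ‖u‖ := by
      intro u
      rcases eq_or_ne u 0 with rfl | hu
      · simp
      · have h1 : ‖u‖ ≠ 0 := norm_ne_zero_iff.mpr hu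
        have hmem : ((‖u‖⁻¹ : ℝ) : ℂ) • u ∈ Metric.sphere (0 : EuclideanSpace ℂ (Fin m)) 1 := by
          rw [mem_sphere_zero_iff_norm, norm_smul]
          simp [abs_of_pos (inv_pos.mpr (norm_pos_iff.mpr hu)), inv_mul_cancel₀ h1]
        have this2 : ‖L (((‖u‖⁻¹ : ℝ) : ℂ) • u)‖ ≤ ‖L u₀‖ := hmax hmem
        rw [L.map_smul, norm_smul] at this2
        have h2 : ‖((‖u‖⁻¹ : ℝ) : ℂ)‖ = ‖u‖⁻¹ := by
          simp [abs_of_pos (inv_pos.mpr (norm_pos_iff.mpr hu))]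
        rw [h2] at this2
        have h3 : ‖u‖⁻¹ * ‖L u‖ ≤ ‖L u₀‖ := this2
        calc ‖L u‖ = ‖u‖ * (‖u‖⁻¹ * ‖L u‖) := by field_simp
        _ ≤ ‖u‖ * ‖L u₀‖ := by
            apply mul_le_mul_of_nonneg_left h3 (norm_nonneg _)
        _ = ‖L u₀‖ * ‖u‖ := mul_comm _ _
    have hle : ‖L‖ ≤ ‖L u₀‖ := L.opNorm_le_bound (norm_nonneg _) hbound
    have hlt : ‖L u₀‖ < δ := by
      have := h u₀ (by intro h0; rw [h0] at hu₀; simp at hu₀)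
      rwa [hu₀, mul_one] at this
    exact lt_of_le_of_lt hle hlt

lemma exp_neg_pi_div_two_mul_I : Complex.exp (((-(Real.pi/2) : ℝ) : ℂ) * Complex.I) = -Complex.I := by
  rw [Complex.exp_mul_I, ← Complex.ofReal_cos, ← Complex.ofReal_sin]
  simp [Real.cos_pi_div_two, Real.sin_pi_div_two]

set_option maxHeartbeats 2000000 in
/-- Low-frequency L∞ bound via LMI (sufficiency direction of Theorem 2). -/
theorem fos_Linf_low_frequency {n m p : ℕ} (ν φ δ ωL : ℝ)
    (hν : 0 < ν) (hν2 : ν < 2) (hφ : φ = (Real.pi / 2) * (ν - 1))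
    (hδ : 0 < δ) (hωL : 0 < ωL)
    (A : Matrix (Fin n) (Fin n) ℝ) (B : Matrix (Fin n) (Fin m) ℝ)
    (C : Matrix (Fin p) (Fin n) ℝ) (D : Matrix (Fin p) (Fin m) ℝ)
    (U V : Matrix (Fin n) (Fin n) ℂ)
    (hU : U.IsHermitian) (hV : V.IsHermitian) (hVpd : V.PosDef)
    (X : Matrix (Fin n) (Fin n) ℂ) (Y : Matrix (Fin m) (Fin n) ℂ)
    (hX : X = Complex.exp ((φ : ℂ) * Complex.I) • ((cmap A)ᵀ * U))
    (hY : Y = -((cmap B)ᵀ * V * cmap A) +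
      Complex.exp ((φ : ℂ) * Complex.I) • ((cmap B)ᵀ * U))
    (hLMI : (-(block3
      (X + Xᴴ - (cmap A)ᵀ * V * cmap A + ((ωL ^ (2 * ν) : ℝ) : ℂ) • V) Yᴴ (cmap C)ᵀ
      Y (-(δ : ℂ) • 1 - (cmap B)ᵀ * V * cmap B) (cmap D)ᵀ
      (cmap C) (cmap D) (-(δ : ℂ) • 1))).PosDef) :
    ∀ ω : ℝ, 0 ≤ ω → ω ≤ ωL →
      IsUnit ((((ω ^ ν : ℝ) : ℂ) * Complex.exp ((Real.pi * ν / 2 : ℝ) * Complex.I)) •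
          (1 : Matrix (Fin n) (Fin n) ℂ) - cmap A) ∧
      sigmaMax (cmap C *
        ((((ω ^ ν : ℝ) : ℂ) * Complex.exp ((Real.pi * ν / 2 : ℝ) * Complex.I)) •
          (1 : Matrix (Fin n) (Fin n) ℂ) - cmap A)⁻¹ * cmap B + cmap D) < δ := by
  intro ω hω0 hωle
  set e : ℂ := Complex.exp ((φ : ℂ) * Complex.I) with he
  set s : ℂ := ((ω ^ ν : ℝ) : ℂ) * Complex.exp (((Real.pi * ν / 2 : ℝ) : ℂ) * Complex.I) with hs
  -- scalar facts
  have hstars : star s = ((ω ^ ν : ℝ) : ℂ) *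
      Complex.exp (-((((Real.pi * ν / 2 : ℝ)) : ℂ) * Complex.I)) := by
    rw [hs]
    simp only [star_mul', RCLike.star_def, ← Complex.exp_conj, _root_.map_mul,
      Complex.conj_ofReal, Complex.conj_I, mul_neg]
  have hse : star s * e = -Complex.I * ((ω ^ ν : ℝ) : ℂ) := by
    rw [hstars, he, mul_assoc, ← Complex.exp_add]
    have harg : -((((Real.pi * ν / 2 : ℝ)) : ℂ) * Complex.I) + (φ : ℂ) * Complex.I
        = ((-(Real.pi/2) : ℝ) : ℂ) * Complex.I := by
      rw [hφ]; push_cast; ring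
    rw [harg, _root_.exp_neg_pi_div_two_mul_I]
    ring
  have hss : star s * s = ((ω ^ (2 * ν) : ℝ) : ℂ) := by
    have hωsq : ω ^ (2 * ν) = ω ^ ν * ω ^ ν := by
      rw [two_mul, Real.rpow_add' hω0 (by positivity)]
    rw [hstars, hs, mul_mul_mul_comm, ← Complex.exp_add, neg_add_cancel, Complex.exp_zero,
      mul_one, hωsq]
    push_cast; ring
  -- the key inequality
  have key : ∀ (x : Fin n → ℂ) (u : Fin m → ℂ) (w : Fin p → ℂ),
      cmap A *ᵥ x + cmap B *ᵥ u = s • x →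
      Sum.elim (Sum.elim x u) w ≠ 0 →
      (ωL ^ (2*ν) - ω ^ (2*ν)) * (star x ⬝ᵥ (V *ᵥ x)).re - δ * (star u ⬝ᵥ u).re
        - δ * (star w ⬝ᵥ w).re
        + 2 * (star w ⬝ᵥ (cmap C *ᵥ x + cmap D *ᵥ u)).re < 0 := by
    intro x u w hcon hz
    have hpos := hLMI.dotProduct_mulVec_pos hz
    rw [Matrix.neg_mulVec, dotProduct_neg] at hpos
    have hre : (star (Sum.elim (Sum.elim x u) w) ⬝ᵥ ((block3
        (X + Xᴴ - (cmap A)ᵀ * V * cmap A + ((ωL ^ (2 * ν) : ℝ) : ℂ) • V) Yᴴ (cmap C)ᵀ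
        Y (-(δ : ℂ) • 1 - (cmap B)ᵀ * V * cmap B) (cmap D)ᵀ
        (cmap C) (cmap D) (-(δ : ℂ) • 1)) *ᵥ (Sum.elim (Sum.elim x u) w))).re < 0 := by
      have h := (Complex.lt_def.mp hpos).1
      simp only [Complex.zero_re, Complex.neg_re] at h
      linarith
    rw [block3_quad] at hre
    -- piece rewrites
    have pX : star x ⬝ᵥ (X *ᵥ x) = e * (star (cmap A *ᵥ x) ⬝ᵥ (U *ᵥ x)) := by
      simp only [hX, Matrix.smul_mulVec, dotProduct_smul, smul_eq_mul,
        ← Matrix.mulVec_mulVec, cmap_conjTranspose, dp_conjT]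
    have pXh : star x ⬝ᵥ (Xᴴ *ᵥ x) = star (e * (star (cmap A *ᵥ x) ⬝ᵥ (U *ᵥ x))) := by
      rw [dp_conjT', pX]
    have pAVA : star x ⬝ᵥ (((cmap A)ᵀ * V * cmap A) *ᵥ x)
        = star (cmap A *ᵥ x) ⬝ᵥ (V *ᵥ (cmap A *ᵥ x)) := by
      simp only [← Matrix.mulVec_mulVec, cmap_conjTranspose, dp_conjT]
    have pY : star u ⬝ᵥ (Y *ᵥ x) = -(star (cmap B *ᵥ u) ⬝ᵥ (V *ᵥ (cmap A *ᵥ x)))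
        + e * (star (cmap B *ᵥ u) ⬝ᵥ (U *ᵥ x)) := by
      simp only [hY, Matrix.add_mulVec, Matrix.neg_mulVec, dotProduct_add,
        dotProduct_neg, Matrix.smul_mulVec, dotProduct_smul, smul_eq_mul,
        ← Matrix.mulVec_mulVec, cmap_conjTranspose, dp_conjT]
    have pYh : star x ⬝ᵥ (Yᴴ *ᵥ u) = star (star u ⬝ᵥ (Y *ᵥ x)) := dp_conjT' _ _ _
    have p22 : star u ⬝ᵥ ((-(δ:ℂ) • 1 - (cmap B)ᵀ * V * cmap B) *ᵥ u)
        = -(δ:ℂ) * (star u ⬝ᵥ u) - star (cmap B *ᵥ u) ⬝ᵥ (V *ᵥ (cmap B *ᵥ u)) := by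
      simp only [Matrix.sub_mulVec, dotProduct_sub, Matrix.smul_mulVec,
        Matrix.one_mulVec, dotProduct_smul, smul_eq_mul,
        ← Matrix.mulVec_mulVec, cmap_conjTranspose, dp_conjT]
    have p13 : star x ⬝ᵥ ((cmap C)ᵀ *ᵥ w) = star (star w ⬝ᵥ (cmap C *ᵥ x)) := by
      rw [cmap_conjTranspose, dp_conjT']
    have p23 : star u ⬝ᵥ ((cmap D)ᵀ *ᵥ w) = star (star w ⬝ᵥ (cmap D *ᵥ u)) := by
      rw [cmap_conjTranspose, dp_conjT']
    have p33 : star w ⬝ᵥ ((-(δ:ℂ) • 1) *ᵥ w) = -(δ:ℂ) * (star w ⬝ᵥ w) := by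
      rw [Matrix.smul_mulVec, Matrix.one_mulVec, dotProduct_smul, smul_eq_mul]
    have p11 : star x ⬝ᵥ ((X + Xᴴ - (cmap A)ᵀ * V * cmap A + ((ωL ^ (2 * ν) : ℝ) : ℂ) • V) *ᵥ x)
        = e * (star (cmap A *ᵥ x) ⬝ᵥ (U *ᵥ x))
          + star (e * (star (cmap A *ᵥ x) ⬝ᵥ (U *ᵥ x)))
          - star (cmap A *ᵥ x) ⬝ᵥ (V *ᵥ (cmap A *ᵥ x))
          + ((ωL ^ (2 * ν) : ℝ) : ℂ) * (star x ⬝ᵥ (V *ᵥ x)) := by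
      rw [Matrix.add_mulVec, Matrix.sub_mulVec, Matrix.add_mulVec, dotProduct_add,
        dotProduct_sub, dotProduct_add, Matrix.smul_mulVec,
        dotProduct_smul, smul_eq_mul, pX, pXh, pAVA]
    -- cancellation facts
    have hcU : star (star x ⬝ᵥ (U *ᵥ x)) = star x ⬝ᵥ (U *ᵥ x) := by
      have h := dp_conjT' U x x
      rw [hU.eq] at h
      exact h.symm
    have G1 : e * (star (cmap A *ᵥ x) ⬝ᵥ (U *ᵥ x)) + e * (star (cmap B *ᵥ u) ⬝ᵥ (U *ᵥ x))
        = -Complex.I * ((ω ^ ν : ℝ) : ℂ) * (star x ⬝ᵥ (U *ᵥ x)) := by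
      rw [← mul_add, ← add_dotProduct, ← star_add, hcon, star_smul,
        smul_dotProduct, smul_eq_mul, ← mul_assoc, mul_comm e (star s), hse]
    have G1s : star (e * (star (cmap A *ᵥ x) ⬝ᵥ (U *ᵥ x)))
        + star (e * (star (cmap B *ᵥ u) ⬝ᵥ (U *ᵥ x)))
        = Complex.I * ((ω ^ ν : ℝ) : ℂ) * (star x ⬝ᵥ (U *ᵥ x)) := by
      rw [← star_add, G1, star_mul', hcU, star_mul', star_neg]
      simp only [RCLike.star_def, Complex.conj_ofReal, Complex.conj_I]
      ring
    have hvab : star (star (cmap B *ᵥ u) ⬝ᵥ (V *ᵥ (cmap A *ᵥ x)))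
        = star (cmap A *ᵥ x) ⬝ᵥ (V *ᵥ (cmap B *ᵥ u)) := by
      have h := dp_conjT' V (cmap B *ᵥ u) (cmap A *ᵥ x)
      rw [hV.eq] at h
      exact h.symm
    have G2 : star (cmap A *ᵥ x) ⬝ᵥ (V *ᵥ (cmap A *ᵥ x))
        + star (cmap A *ᵥ x) ⬝ᵥ (V *ᵥ (cmap B *ᵥ u))
        + star (cmap B *ᵥ u) ⬝ᵥ (V *ᵥ (cmap A *ᵥ x))
        + star (cmap B *ᵥ u) ⬝ᵥ (V *ᵥ (cmap B *ᵥ u))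
        = ((ω ^ (2 * ν) : ℝ) : ℂ) * (star x ⬝ᵥ (V *ᵥ x)) := by
      have expand : star (cmap A *ᵥ x + cmap B *ᵥ u) ⬝ᵥ (V *ᵥ (cmap A *ᵥ x + cmap B *ᵥ u))
          = star (cmap A *ᵥ x) ⬝ᵥ (V *ᵥ (cmap A *ᵥ x))
            + star (cmap A *ᵥ x) ⬝ᵥ (V *ᵥ (cmap B *ᵥ u))
            + star (cmap B *ᵥ u) ⬝ᵥ (V *ᵥ (cmap A *ᵥ x))
            + star (cmap B *ᵥ u) ⬝ᵥ (V *ᵥ (cmap B *ᵥ u)) := by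
        rw [Matrix.mulVec_add, star_add]
        simp only [add_dotProduct, dotProduct_add]
        ring
      rw [← expand, hcon, star_smul, smul_dotProduct, Matrix.mulVec_smul,
        dotProduct_smul, smul_eq_mul, smul_eq_mul, ← mul_assoc, hss]
    -- assemble the complex identity
    have hQ : (star x ⬝ᵥ ((X + Xᴴ - (cmap A)ᵀ * V * cmap A + ((ωL ^ (2 * ν) : ℝ) : ℂ) • V) *ᵥ x)
          + star x ⬝ᵥ (Yᴴ *ᵥ u) + star x ⬝ᵥ ((cmap C)ᵀ *ᵥ w))
        + (star u ⬝ᵥ (Y *ᵥ x) + star u ⬝ᵥ ((-(δ:ℂ) • 1 - (cmap B)ᵀ * V * cmap B) *ᵥ u)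
          + star u ⬝ᵥ ((cmap D)ᵀ *ᵥ w))
        + (star w ⬝ᵥ (cmap C *ᵥ x) + star w ⬝ᵥ (cmap D *ᵥ u)
          + star w ⬝ᵥ ((-(δ:ℂ) • 1) *ᵥ w))
        = ((ωL ^ (2*ν) : ℝ) : ℂ) * (star x ⬝ᵥ (V *ᵥ x))
          - ((ω ^ (2*ν) : ℝ) : ℂ) * (star x ⬝ᵥ (V *ᵥ x))
          - (δ:ℂ) * (star u ⬝ᵥ u) - (δ:ℂ) * (star w ⬝ᵥ w)
          + ((star w ⬝ᵥ (cmap C *ᵥ x) + star w ⬝ᵥ (cmap D *ᵥ u))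
            + star (star w ⬝ᵥ (cmap C *ᵥ x) + star w ⬝ᵥ (cmap D *ᵥ u))) := by
      rw [p11, pYh, pY, p22, p13, p23, p33]
      simp only [star_add, star_neg]
      linear_combination G1 + G1s - G2 - hvab
    rw [hQ] at hre
    -- extract real parts
    simp only [Complex.add_re, Complex.sub_re, Complex.mul_re, Complex.ofReal_re,
      Complex.ofReal_im, Complex.neg_re, Complex.neg_im, zero_mul, sub_zero,
      RCLike.star_def, Complex.conj_re] at hre
    rw [dotProduct_add, Complex.add_re]
    ring_nf at hre ⊢
    linarith
  -- invertibility
  have hinv : IsUnit (s • (1 : Matrix (Fin n) (Fin n) ℂ) - cmap A) := by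
    rw [Matrix.isUnit_iff_isUnit_det, isUnit_iff_ne_zero]
    intro hdet
    obtain ⟨x, hx0, hMx⟩ := Matrix.exists_mulVec_eq_zero_iff.mpr hdet
    rw [Matrix.sub_mulVec, Matrix.smul_mulVec, Matrix.one_mulVec] at hMx
    have hcon : cmap A *ᵥ x + cmap B *ᵥ (0 : Fin m → ℂ) = s • x := by
      rw [Matrix.mulVec_zero, add_zero]
      exact (sub_eq_zero.mp hMx).symm
    have hz : Sum.elim (Sum.elim x (0 : Fin m → ℂ)) (0 : Fin p → ℂ) ≠ 0 := by
      intro h0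
      apply hx0
      funext i
      exact congrFun h0 (Sum.inl (Sum.inl i))
    have hk := key x 0 0 hcon hz
    simp only [star_zero, zero_dotProduct, Matrix.mulVec_zero, add_zero,
      Complex.zero_re, mul_zero, sub_zero] at hk
    have h1 : ω ^ (2*ν) ≤ ωL ^ (2*ν) := Real.rpow_le_rpow hω0 hωle (by positivity)
    have h2 : 0 < (star x ⬝ᵥ (V *ᵥ x)).re := by
      have := (Complex.lt_def.mp (hVpd.dotProduct_mulVec_pos hx0)).1
      simpa using this
    nlinarith
  refine ⟨hinv, ?_⟩
  -- norm bound
  have hdet : IsUnit (s • (1 : Matrix (Fin n) (Fin n) ℂ) - cmap A).det :=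
    (Matrix.isUnit_iff_isUnit_det _).mp hinv
  set Minv : Matrix (Fin n) (Fin n) ℂ := (s • (1 : Matrix (Fin n) (Fin n) ℂ) - cmap A)⁻¹
    with hMinv
  set G : Matrix (Fin p) (Fin m) ℂ := cmap C * Minv * cmap B + cmap D with hG
  show sigmaMax G < δ
  rw [sigmaMax]
  apply opNorm_lt_of_forall _ hδ
  intro uE huE
  set v : Fin m → ℂ := WithLp.equiv 2 (Fin m → ℂ) uE with hv
  have hv0 : v ≠ 0 := by
    intro h0
    apply huE
    have : uE = (WithLp.equiv 2 (Fin m → ℂ)).symm v := ((WithLp.equiv 2 _).symm_apply_apply uE).symm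
    rw [this, h0]
    simp
  set x : Fin n → ℂ := Minv *ᵥ (cmap B *ᵥ v) with hx
  have hcon : cmap A *ᵥ x + cmap B *ᵥ v = s • x := by
    have h1 : (s • (1 : Matrix (Fin n) (Fin n) ℂ) - cmap A) *ᵥ x = cmap B *ᵥ v := by
      rw [hx, Matrix.mulVec_mulVec, Matrix.mul_nonsing_inv _ hdet, Matrix.one_mulVec]
    rw [Matrix.sub_mulVec, Matrix.smul_mulVec, Matrix.one_mulVec] at h1
    rw [← h1]
    abel
  set y : Fin p → ℂ := cmap C *ᵥ x + cmap D *ᵥ v with hy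
  have hGv : G *ᵥ v = y := by
    rw [hG, Matrix.add_mulVec, ← Matrix.mulVec_mulVec, ← Matrix.mulVec_mulVec, hy, hx]
  set w : Fin p → ℂ := ((δ⁻¹ : ℝ) : ℂ) • y with hw
  have hzne : Sum.elim (Sum.elim x v) w ≠ 0 := by
    intro h0
    apply hv0
    funext i
    exact congrFun h0 (Sum.inl (Sum.inr i))
  have hk := key x v w hcon hzne
  have hww : (star w ⬝ᵥ w).re = δ⁻¹ * (δ⁻¹ * (star y ⬝ᵥ y).re) := by
    rw [hw, star_smul, smul_dotProduct, dotProduct_smul]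
    simp [Complex.mul_re, Complex.ofReal_re, Complex.ofReal_im]
  have hwy : (star w ⬝ᵥ y).re = δ⁻¹ * (star y ⬝ᵥ y).re := by
    rw [hw, star_smul, smul_dotProduct]
    simp [Complex.mul_re, Complex.ofReal_re, Complex.ofReal_im]
  rw [← hy] at hk
  have h1 : ω ^ (2*ν) ≤ ωL ^ (2*ν) := Real.rpow_le_rpow hω0 hωle (by positivity)
  have h2 : 0 ≤ (star x ⬝ᵥ (V *ᵥ x)).re := by
    rcases eq_or_ne x 0 with h | h
    · rw [h]; simp
    · have := (Complex.lt_def.mp (hVpd.dotProduct_mulVec_pos h)).1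
      have h' : 0 < (star x ⬝ᵥ (V *ᵥ x)).re := by simpa using this
      linarith
  have hy2 : (star y ⬝ᵥ y).re < δ^2 * (star v ⬝ᵥ v).re := by
    rw [hww, hwy] at hk
    have e1 : δ * (δ⁻¹ * (δ⁻¹ * (star y ⬝ᵥ y).re)) = δ⁻¹ * (star y ⬝ᵥ y).re := by
      field_simp
    have h3 : δ⁻¹ * (star y ⬝ᵥ y).re < δ * (star v ⬝ᵥ v).re := by
      nlinarith [mul_nonneg (sub_nonneg.mpr h1) h2, e1]
    have h4 : δ * (δ⁻¹ * (star y ⬝ᵥ y).re) = (star y ⬝ᵥ y).re := by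
      rw [← mul_assoc, mul_inv_cancel₀ (ne_of_gt hδ), one_mul]
    have h5 := mul_lt_mul_of_pos_left h3 hδ
    rw [h4] at h5
    have h6 : δ * (δ * (star v ⬝ᵥ v).re) = δ^2 * (star v ⬝ᵥ v).re := by ring
    linarith
  -- convert to norms
  have hLu : (LinearMap.toContinuousLinearMap (Matrix.toEuclideanLin G)) uE
      = (WithLp.equiv 2 (Fin p → ℂ)).symm (G *ᵥ v) := rfl
  have huev : (WithLp.equiv 2 (Fin m → ℂ)).symm v = uE :=
    (WithLp.equiv 2 (Fin m → ℂ)).symm_apply_apply uE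
  have hnu : ‖uE‖^2 = (star v ⬝ᵥ v).re := by
    rw [dp_self_norm, huev]
  have hny : ‖(LinearMap.toContinuousLinearMap (Matrix.toEuclideanLin G)) uE‖^2
      = (star y ⬝ᵥ y).re := by
    rw [hLu, hGv, dp_self_norm]
  have hnn1 : 0 ≤ ‖(LinearMap.toContinuousLinearMap (Matrix.toEuclideanLin G)) uE‖ :=
    norm_nonneg _
  have hnn2 : 0 < ‖uE‖ := norm_pos_iff.mpr huE
  by_contra hcon2
  push_neg at hcon2
  have hb : 0 < δ * ‖uE‖ := mul_pos hδ hnn2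
  have hmm := mul_le_mul hcon2 hcon2 (le_of_lt hb) hnn1
  nlinarith [hmm, hny, hnu, hy2]
end

section
/- Middle-frequency L∞ bound via LMI (sufficiency direction of Theorem 4): Let 0 < ν < 2, φ = (π/2)(ν−1), δ > 0, 0 ≤ ω₁ ≤ ω₂, and let A ∈ ℝ^{n×n}, B ∈ ℝ^{n×m}, C ∈ ℝ^{p×n}, D ∈ ℝ^{p×m}. Set ω_c = e^{iπν/2}(ω₁^ν + ω₂^ν)/2. Suppose there exist Hermitian matrices U, V ∈ ℂ^{n×n} with V positive definite such that, with X = Aᵀ(e^{iφ}U + ω_c V) and Y = −BᵀVA + Bᵀ(e^{iφ}U + ω_c V), the Hermitian block matrix [[Sym(X) − AᵀVA − ω₁^ν ω₂^ν V, Y*, Cᵀ],[Y, −δI_m − BᵀVB, Dᵀ],[C, D, −δI_p]] is negative definite. Then for every ω ∈ [ω₁, ω₂], the matrix ω^ν e^{iπν/2} I_n − A is invertible and σmax(C(ω^ν e^{iπν/2} I_n − A)^{−1}B + D) < δ. -/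
open Matrix Complex
open scoped Matrix Kronecker ComplexOrder

section Helpers

lemma star_sum_elim {a b : Type*} (x : a → ℂ) (u : b → ℂ) :
    star (Sum.elim x u) = Sum.elim (star x) (star u) := by
  funext i; cases i <;> rfl

lemma dot_herm {a b : Type*} [Fintype a] [Fintype b] (N : Matrix a b ℂ) (x : b → ℂ) (w : a → ℂ) :
    star x ⬝ᵥ Nᴴ *ᵥ w = star (N *ᵥ x) ⬝ᵥ w := by
  rw [star_mulVec, dotProduct_mulVec]

lemma dot_cmul {a b c : Type*} [Fintype a] [Fintype b] [Fintype c]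
    (N : Matrix a b ℂ) (M : Matrix a c ℂ) (x : b → ℂ) (v : c → ℂ) :
    star x ⬝ᵥ (Nᴴ * M) *ᵥ v = star (N *ᵥ x) ⬝ᵥ M *ᵥ v := by
  rw [star_mulVec, ← dotProduct_mulVec, mulVec_mulVec]

lemma cmap_conjT {a b : ℕ} (M : Matrix (Fin a) (Fin b) ℝ) : (cmap M)ᵀ = (cmap M)ᴴ := by
  ext i j
  simp [cmap, Matrix.conjTranspose_apply, Matrix.transpose_apply, Matrix.map_apply,
    Complex.star_def, Complex.conj_ofReal]

lemma quad3 {n m p : ℕ}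
    (A11 : Matrix (Fin n) (Fin n) ℂ) (A12 : Matrix (Fin n) (Fin m) ℂ)
    (A13 : Matrix (Fin n) (Fin p) ℂ)
    (A21 : Matrix (Fin m) (Fin n) ℂ) (A22 : Matrix (Fin m) (Fin m) ℂ)
    (A23 : Matrix (Fin m) (Fin p) ℂ)
    (A31 : Matrix (Fin p) (Fin n) ℂ) (A32 : Matrix (Fin p) (Fin m) ℂ)
    (A33 : Matrix (Fin p) (Fin p) ℂ)
    (x : Fin n → ℂ) (u : Fin m → ℂ) (w : Fin p → ℂ) :
    star (Sum.elim (Sum.elim x u) w) ⬝ᵥ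
      (block3 A11 A12 A13 A21 A22 A23 A31 A32 A33) *ᵥ (Sum.elim (Sum.elim x u) w) =
    star x ⬝ᵥ A11 *ᵥ x + star x ⬝ᵥ A12 *ᵥ u + star x ⬝ᵥ A13 *ᵥ w +
    (star u ⬝ᵥ A21 *ᵥ x + star u ⬝ᵥ A22 *ᵥ u + star u ⬝ᵥ A23 *ᵥ w) +
    (star w ⬝ᵥ A31 *ᵥ x + star w ⬝ᵥ A32 *ᵥ u + star w ⬝ᵥ A33 *ᵥ w) := by
  simp only [block3, star_sum_elim, fromBlocks_mulVec, Sum.elim_comp_inl, Sum.elim_comp_inr,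
    fromRows_mulVec, fromCols_mulVec_sumElim, sumElim_dotProduct_sumElim,
    dotProduct_add]
  ring

lemma norm_sq_euclid {k : ℕ} (xE : EuclideanSpace ℂ (Fin k)) :
    ‖xE‖ ^ 2 = (star (WithLp.equiv 2 (Fin k → ℂ) xE) ⬝ᵥ (WithLp.equiv 2 (Fin k → ℂ) xE)).re := by
  rw [← inner_self_eq_norm_sq (𝕜 := ℂ), EuclideanSpace.inner_eq_star_dotProduct, dotProduct_comm]
  rfl

end Helpers

/-- Middle-frequency L∞ bound via LMI (sufficiency direction of Theorem 4). -/
theorem fos_Linf_middle_frequency {n m p : ℕ} (ν φ δ ω₁ ω₂ : ℝ)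
    (hν : 0 < ν) (hν2 : ν < 2) (hφ : φ = (Real.pi / 2) * (ν - 1))
    (hδ : 0 < δ) (hω₁ : 0 ≤ ω₁) (hω₁₂ : ω₁ ≤ ω₂)
    (A : Matrix (Fin n) (Fin n) ℝ) (B : Matrix (Fin n) (Fin m) ℝ)
    (C : Matrix (Fin p) (Fin n) ℝ) (D : Matrix (Fin p) (Fin m) ℝ)
    (ωc : ℂ)
    (hωc : ωc = Complex.exp ((Real.pi * ν / 2 : ℝ) * Complex.I) *
      (((ω₁ ^ ν : ℝ) : ℂ) + ((ω₂ ^ ν : ℝ) : ℂ)) / 2)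
    (U V : Matrix (Fin n) (Fin n) ℂ)
    (hU : U.IsHermitian) (hV : V.IsHermitian) (hVpd : V.PosDef)
    (X : Matrix (Fin n) (Fin n) ℂ) (Y : Matrix (Fin m) (Fin n) ℂ)
    (hX : X = (cmap A)ᵀ * (Complex.exp ((φ : ℂ) * Complex.I) • U + ωc • V))
    (hY : Y = -((cmap B)ᵀ * V * cmap A) +
      (cmap B)ᵀ * (Complex.exp ((φ : ℂ) * Complex.I) • U + ωc • V))
    (hLMI : (-(block3
      (X + Xᴴ - (cmap A)ᵀ * V * cmap A - (((ω₁ ^ ν * ω₂ ^ ν : ℝ)) : ℂ) • V) Yᴴ (cmap C)ᵀ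
      Y (-(δ : ℂ) • 1 - (cmap B)ᵀ * V * cmap B) (cmap D)ᵀ
      (cmap C) (cmap D) (-(δ : ℂ) • 1))).PosDef) :
    ∀ ω : ℝ, ω₁ ≤ ω → ω ≤ ω₂ →
      IsUnit ((((ω ^ ν : ℝ) : ℂ) * Complex.exp ((Real.pi * ν / 2 : ℝ) * Complex.I)) •
          (1 : Matrix (Fin n) (Fin n) ℂ) - cmap A) ∧
      sigmaMax (cmap C *
        ((((ω ^ ν : ℝ) : ℂ) * Complex.exp ((Real.pi * ν / 2 : ℝ) * Complex.I)) •
          (1 : Matrix (Fin n) (Fin n) ℂ) - cmap A)⁻¹ * cmap B + cmap D) < δ := by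
  intro ω hw1 hw2
  have hω0 : 0 ≤ ω := le_trans hω₁ hw1
  set θ : ℝ := Real.pi * ν / 2 with hθ
  set e : ℂ := Complex.exp ((θ : ℂ) * Complex.I) with he
  set f : ℂ := Complex.exp ((φ : ℂ) * Complex.I) with hfdef
  set r : ℝ := ω ^ ν with hrdef
  set r₁ : ℝ := ω₁ ^ ν with hr1def
  set r₂ : ℝ := ω₂ ^ ν with hr2def
  have hr1 : r₁ ≤ r := Real.rpow_le_rpow hω₁ hw1 hν.le
  have hr2 : r ≤ r₂ := Real.rpow_le_rpow hω0 hw2 hν.le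
  set lam : ℂ := (r : ℂ) * e with hlam
  set W : Matrix (Fin n) (Fin n) ℂ := f • U + ωc • V with hW
  -- scalar facts
  have hee : star e * e = 1 := by
    have h1 : (starRingEnd ℂ) ((θ:ℂ) * Complex.I) = -((θ:ℂ) * Complex.I) := by
      rw [_root_.map_mul, Complex.conj_ofReal, Complex.conj_I, mul_neg]
    rw [he, Complex.star_def, ← Complex.exp_conj, h1, ← Complex.exp_add, neg_add_cancel,
      Complex.exp_zero]
  have hfe : f = -Complex.I * e := by
    have harg : (φ:ℂ) * Complex.I = ((-(Real.pi/2) : ℝ):ℂ) * Complex.I + (θ:ℂ) * Complex.I := by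
      rw [hφ, hθ]; push_cast; ring
    rw [hfdef, harg, Complex.exp_add, he]
    have h2 : Complex.exp (((-(Real.pi/2) : ℝ):ℂ) * Complex.I) = -Complex.I := by
      rw [Complex.exp_mul_I]
      push_cast
      rw [Complex.cos_neg, Complex.sin_neg, Complex.cos_pi_div_two, Complex.sin_pi_div_two]
      ring
    rw [h2]
  have hcf : star f = Complex.I * star e := by
    rw [hfe, star_mul', star_neg, Complex.star_def, Complex.conj_I, neg_neg]
  have hclam : star lam = (r : ℂ) * star e := by
    rw [hlam, star_mul', Complex.star_def, Complex.conj_ofReal]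
  have hcwc : star ωc = star e * (((r₁:ℝ):ℂ) + ((r₂:ℝ):ℂ)) / 2 := by
    rw [hωc]
    simp [star_div₀, star_mul', star_add, Complex.star_def, Complex.conj_ofReal]
  have hc1 : star lam * f + lam * star f = 0 := by
    rw [hclam, hcf, hfe, hlam]; ring
  have hc2 : star lam * ωc + lam * star ωc - star lam * lam - ((r₁ * r₂ : ℝ) : ℂ)
      = (((r - r₁) * (r₂ - r) : ℝ) : ℂ) := by
    rw [hclam, hcwc, hωc, hlam]
    push_cast
    linear_combination ((r:ℂ) * ((r₁:ℂ) + (r₂:ℂ)) - (r:ℂ) * (r:ℂ)) * hee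
  have hWH : Wᴴ = star f • U + star ωc • V := by
    rw [hW]
    simp only [conjTranspose_add, conjTranspose_smul, hU.eq, hV.eq]
  -- the key quadratic inequality
  have key : ∀ (x : Fin n → ℂ) (u : Fin m → ℂ) (w : Fin p → ℂ),
      cmap A *ᵥ x + cmap B *ᵥ u = lam • x →
      ¬(x = 0 ∧ u = 0 ∧ w = 0) →
      (-(δ:ℂ) * (star u ⬝ᵥ u) + star w ⬝ᵥ (cmap C *ᵥ x + cmap D *ᵥ u)
        + star (cmap C *ᵥ x + cmap D *ᵥ u) ⬝ᵥ w - (δ:ℂ) * (star w ⬝ᵥ w)).re < 0 := by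
    intro x u w hcon hnz
    have hζ : Sum.elim (Sum.elim x u) w ≠ 0 := by
      intro h
      apply hnz
      refine ⟨funext fun i => ?_, funext fun i => ?_, funext fun i => ?_⟩
      · exact congrFun h (Sum.inl (Sum.inl i))
      · exact congrFun h (Sum.inl (Sum.inr i))
      · exact congrFun h (Sum.inr i)
    -- term rewrites
    have t1 : star x ⬝ᵥ ((cmap A)ᴴ * W) *ᵥ x = star (cmap A *ᵥ x) ⬝ᵥ W *ᵥ x :=
      dot_cmul _ _ _ _
    have t2 : star x ⬝ᵥ (Wᴴ * cmap A) *ᵥ x = star x ⬝ᵥ Wᴴ *ᵥ (cmap A *ᵥ x) := by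
      rw [← mulVec_mulVec]
    have t3 : star x ⬝ᵥ ((cmap A)ᴴ * V * cmap A) *ᵥ x
        = star (cmap A *ᵥ x) ⬝ᵥ V *ᵥ (cmap A *ᵥ x) := by
      rw [Matrix.mul_assoc, dot_cmul, mulVec_mulVec]
    have t4 : star x ⬝ᵥ (((r₁ * r₂ : ℝ):ℂ) • V) *ᵥ x
        = ((r₁ * r₂ : ℝ):ℂ) * (star x ⬝ᵥ V *ᵥ x) := by
      rw [smul_mulVec, dotProduct_smul, smul_eq_mul]
    have e11 : star x ⬝ᵥ (X + Xᴴ - (cmap A)ᵀ * V * cmap A - ((r₁ * r₂ : ℝ):ℂ) • V) *ᵥ x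
        = star (cmap A *ᵥ x) ⬝ᵥ W *ᵥ x + star x ⬝ᵥ Wᴴ *ᵥ (cmap A *ᵥ x)
          - star (cmap A *ᵥ x) ⬝ᵥ V *ᵥ (cmap A *ᵥ x)
          - ((r₁ * r₂ : ℝ):ℂ) * (star x ⬝ᵥ V *ᵥ x) := by
      rw [hX, cmap_conjT]
      simp only [conjTranspose_mul, conjTranspose_conjTranspose]
      rw [sub_mulVec, sub_mulVec, dotProduct_sub, dotProduct_sub, add_mulVec, dotProduct_add,
        t1, t2, t3, t4]
    have e12 : star x ⬝ᵥ Yᴴ *ᵥ u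
        = star x ⬝ᵥ Wᴴ *ᵥ (cmap B *ᵥ u) - star (cmap A *ᵥ x) ⬝ᵥ V *ᵥ (cmap B *ᵥ u) := by
      rw [hY, cmap_conjT]
      simp only [conjTranspose_add, conjTranspose_neg, conjTranspose_mul,
        conjTranspose_conjTranspose, hV.eq]
      have s1 : star x ⬝ᵥ ((cmap A)ᴴ * (V * cmap B)) *ᵥ u
          = star (cmap A *ᵥ x) ⬝ᵥ V *ᵥ (cmap B *ᵥ u) := by
        rw [dot_cmul, mulVec_mulVec]
      have s2 : star x ⬝ᵥ (Wᴴ * cmap B) *ᵥ u = star x ⬝ᵥ Wᴴ *ᵥ (cmap B *ᵥ u) := by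
        rw [← mulVec_mulVec]
      rw [add_mulVec, dotProduct_add, neg_mulVec, dotProduct_neg, s1, s2]
      ring
    have e13 : star x ⬝ᵥ (cmap C)ᵀ *ᵥ w = star (cmap C *ᵥ x) ⬝ᵥ w := by
      rw [cmap_conjT, dot_herm]
    have e21 : star u ⬝ᵥ Y *ᵥ x
        = star (cmap B *ᵥ u) ⬝ᵥ W *ᵥ x - star (cmap B *ᵥ u) ⬝ᵥ V *ᵥ (cmap A *ᵥ x) := by
      rw [hY, cmap_conjT]
      have s1 : star u ⬝ᵥ ((cmap B)ᴴ * V * cmap A) *ᵥ x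
          = star (cmap B *ᵥ u) ⬝ᵥ V *ᵥ (cmap A *ᵥ x) := by
        rw [Matrix.mul_assoc, dot_cmul, mulVec_mulVec]
      have s2 : star u ⬝ᵥ ((cmap B)ᴴ * W) *ᵥ x = star (cmap B *ᵥ u) ⬝ᵥ W *ᵥ x :=
        dot_cmul _ _ _ _
      rw [add_mulVec, dotProduct_add, neg_mulVec, dotProduct_neg, s1, s2]
      ring
    have e22 : star u ⬝ᵥ (-(δ:ℂ) • 1 - (cmap B)ᵀ * V * cmap B) *ᵥ u
        = -(δ:ℂ) * (star u ⬝ᵥ u) - star (cmap B *ᵥ u) ⬝ᵥ V *ᵥ (cmap B *ᵥ u) := by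
      rw [cmap_conjT]
      have s1 : star u ⬝ᵥ ((cmap B)ᴴ * V * cmap B) *ᵥ u
          = star (cmap B *ᵥ u) ⬝ᵥ V *ᵥ (cmap B *ᵥ u) := by
        rw [Matrix.mul_assoc, dot_cmul, mulVec_mulVec]
      rw [sub_mulVec, dotProduct_sub, smul_mulVec, one_mulVec, dotProduct_smul,
        smul_eq_mul, s1]
    have e23 : star u ⬝ᵥ (cmap D)ᵀ *ᵥ w = star (cmap D *ᵥ u) ⬝ᵥ w := by
      rw [cmap_conjT, dot_herm]
    have e33 : star w ⬝ᵥ (-(δ:ℂ) • (1 : Matrix (Fin p) (Fin p) ℂ)) *ᵥ w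
        = -(δ:ℂ) * (star w ⬝ᵥ w) := by
      rw [smul_mulVec, one_mulVec, dotProduct_smul, smul_eq_mul]
    -- combination identities
    have hA1 : star (cmap A *ᵥ x) ⬝ᵥ W *ᵥ x + star (cmap B *ᵥ u) ⬝ᵥ W *ᵥ x
        = star lam * (star x ⬝ᵥ W *ᵥ x) := by
      rw [← add_dotProduct, ← star_add, hcon, star_smul, smul_dotProduct, smul_eq_mul]
    have hA2 : star x ⬝ᵥ Wᴴ *ᵥ (cmap A *ᵥ x) + star x ⬝ᵥ Wᴴ *ᵥ (cmap B *ᵥ u)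
        = lam * (star x ⬝ᵥ Wᴴ *ᵥ x) := by
      rw [← dotProduct_add, ← mulVec_add, hcon, mulVec_smul, dotProduct_smul, smul_eq_mul]
    have hA3 : star (cmap A *ᵥ x) ⬝ᵥ V *ᵥ (cmap A *ᵥ x)
        + star (cmap A *ᵥ x) ⬝ᵥ V *ᵥ (cmap B *ᵥ u)
        + star (cmap B *ᵥ u) ⬝ᵥ V *ᵥ (cmap A *ᵥ x)
        + star (cmap B *ᵥ u) ⬝ᵥ V *ᵥ (cmap B *ᵥ u)
        = star lam * (lam * (star x ⬝ᵥ V *ᵥ x)) := by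
      have h := congrArg (fun v => star v ⬝ᵥ V *ᵥ v) hcon
      simp only [star_add, add_dotProduct, mulVec_add, dotProduct_add, star_smul,
        smul_dotProduct, mulVec_smul, dotProduct_smul, smul_eq_mul] at h
      linear_combination h
    have hW1 : star x ⬝ᵥ W *ᵥ x
        = f * (star x ⬝ᵥ U *ᵥ x) + ωc * (star x ⬝ᵥ V *ᵥ x) := by
      rw [hW]
      simp only [add_mulVec, smul_mulVec, dotProduct_add, dotProduct_smul, smul_eq_mul]
    have hW2 : star x ⬝ᵥ Wᴴ *ᵥ x
        = star f * (star x ⬝ᵥ U *ᵥ x) + star ωc * (star x ⬝ᵥ V *ᵥ x) := by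
      rw [hWH]
      simp only [add_mulVec, smul_mulVec, dotProduct_add, dotProduct_smul, smul_eq_mul]
    have hbig : star (Sum.elim (Sum.elim x u) w) ⬝ᵥ
        (block3
          (X + Xᴴ - (cmap A)ᵀ * V * cmap A - ((r₁ * r₂ : ℝ) : ℂ) • V) Yᴴ (cmap C)ᵀ
          Y (-(δ : ℂ) • 1 - (cmap B)ᵀ * V * cmap B) (cmap D)ᵀ
          (cmap C) (cmap D) (-(δ : ℂ) • 1)) *ᵥ (Sum.elim (Sum.elim x u) w)
        = (((r - r₁) * (r₂ - r) : ℝ) : ℂ) * (star x ⬝ᵥ V *ᵥ x)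
          + (-(δ:ℂ) * (star u ⬝ᵥ u) + star w ⬝ᵥ (cmap C *ᵥ x + cmap D *ᵥ u)
            + star (cmap C *ᵥ x + cmap D *ᵥ u) ⬝ᵥ w - (δ:ℂ) * (star w ⬝ᵥ w)) := by
      rw [quad3, e11, e12, e13, e21, e22, e23, e33]
      simp only [mulVec_add, dotProduct_add, star_add, add_dotProduct]
      linear_combination hA1 + hA2 - hA3 + star lam * hW1 + lam * hW2
        + (star x ⬝ᵥ U *ᵥ x) * hc1 + (star x ⬝ᵥ V *ᵥ x) * hc2
    have hpos := hLMI.dotProduct_mulVec_pos hζ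
    rw [Complex.lt_def] at hpos
    obtain ⟨h1, -⟩ := hpos
    rw [neg_mulVec, dotProduct_neg, Complex.neg_re, Complex.zero_re, hbig,
      Complex.add_re] at h1
    have hres : 0 ≤ ((((r - r₁) * (r₂ - r) : ℝ) : ℂ) * (star x ⬝ᵥ V *ᵥ x)).re := by
      rw [Complex.re_ofReal_mul]
      apply mul_nonneg (mul_nonneg (sub_nonneg.2 hr1) (sub_nonneg.2 hr2))
      have hsemi := hVpd.posSemidef.dotProduct_mulVec_nonneg x
      rw [Complex.le_def] at hsemi
      simpa using hsemi.1
    linarith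
  -- invertibility
  have hdet : IsUnit (lam • (1 : Matrix (Fin n) (Fin n) ℂ) - cmap A).det := by
    rw [isUnit_iff_ne_zero]
    intro hdet0
    obtain ⟨v, hv0, hv⟩ := (Matrix.exists_mulVec_eq_zero_iff).2 hdet0
    have hcon : cmap A *ᵥ v + cmap B *ᵥ 0 = lam • v := by
      rw [sub_mulVec, smul_mulVec, one_mulVec, sub_eq_zero] at hv
      rw [mulVec_zero, add_zero]
      exact hv.symm
    have hk := key v 0 0 hcon (fun ⟨h, _, _⟩ => hv0 h)
    simp at hk
  refine ⟨(Matrix.isUnit_iff_isUnit_det _).2 hdet, ?_⟩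
  -- the norm bound
  set G := cmap C * (lam • (1 : Matrix (Fin n) (Fin n) ℂ) - cmap A)⁻¹ * cmap B + cmap D with hG
  have hGv : ∀ uf : Fin m → ℂ, G *ᵥ uf
      = cmap C *ᵥ ((lam • (1 : Matrix (Fin n) (Fin n) ℂ) - cmap A)⁻¹ *ᵥ (cmap B *ᵥ uf))
        + cmap D *ᵥ uf := by
    intro uf
    rw [hG, add_mulVec, ← mulVec_mulVec, ← mulVec_mulVec]
  have key2 : ∀ uf : Fin m → ℂ, uf ≠ 0 →
      (star (G *ᵥ uf) ⬝ᵥ (G *ᵥ uf)).re < δ ^ 2 * (star uf ⬝ᵥ uf).re := by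
    intro uf hu
    have hGy := hGv uf
    set x := (lam • (1 : Matrix (Fin n) (Fin n) ℂ) - cmap A)⁻¹ *ᵥ (cmap B *ᵥ uf) with hx
    have hconx : cmap A *ᵥ x + cmap B *ᵥ uf = lam • x := by
      have h1 : (lam • (1 : Matrix (Fin n) (Fin n) ℂ) - cmap A) *ᵥ x = cmap B *ᵥ uf := by
        rw [hx, mulVec_mulVec, Matrix.mul_nonsing_inv _ hdet, one_mulVec]
      rw [sub_mulVec, smul_mulVec, one_mulVec, sub_eq_iff_eq_add] at h1
      rw [h1]; abel
    set y := cmap C *ᵥ x + cmap D *ᵥ uf with hy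
    have hδc : (δ:ℂ) * ((δ⁻¹:ℝ):ℂ) = 1 := by
      push_cast
      field_simp
    have hkey := key x uf (((δ⁻¹:ℝ):ℂ) • y) hconx (fun ⟨_, h, _⟩ => hu h)
    rw [← hy] at hkey
    have hsimp : -(δ:ℂ) * (star uf ⬝ᵥ uf) + star (((δ⁻¹:ℝ):ℂ) • y) ⬝ᵥ y
        + star y ⬝ᵥ (((δ⁻¹:ℝ):ℂ) • y)
        - (δ:ℂ) * (star (((δ⁻¹:ℝ):ℂ) • y) ⬝ᵥ (((δ⁻¹:ℝ):ℂ) • y))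
        = -(δ:ℂ) * (star uf ⬝ᵥ uf) + ((δ⁻¹:ℝ):ℂ) * (star y ⬝ᵥ y) := by
      simp only [star_smul, smul_dotProduct, dotProduct_smul, smul_eq_mul,
        Complex.star_def, Complex.conj_ofReal]
      linear_combination (-(((δ⁻¹:ℝ):ℂ) * (star y ⬝ᵥ y))) * hδc
    rw [hsimp, Complex.add_re, neg_mul, Complex.neg_re, Complex.re_ofReal_mul,
      Complex.re_ofReal_mul] at hkey
    rw [hGy]
    have h3 : δ⁻¹ * (star y ⬝ᵥ y).re < δ * (star uf ⬝ᵥ uf).re := by linarith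
    calc (star y ⬝ᵥ y).re = δ * (δ⁻¹ * (star y ⬝ᵥ y).re) := by field_simp
      _ < δ * (δ * (star uf ⬝ᵥ uf).re) := by exact mul_lt_mul_of_pos_left h3 hδ
      _ = δ ^ 2 * (star uf ⬝ᵥ uf).re := by ring
  -- convert to operator norm
  simp only [sigmaMax]
  set T := LinearMap.toContinuousLinearMap (Matrix.toEuclideanLin G) with hT
  have hTapp : ∀ uE : EuclideanSpace ℂ (Fin m),
      T uE = (WithLp.equiv 2 (Fin p → ℂ)).symm (G *ᵥ (WithLp.equiv 2 (Fin m → ℂ) uE)) := by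
    intro uE
    rw [hT]
    simp [Matrix.toEuclideanLin_apply]
  have hstrict : ∀ uE : EuclideanSpace ℂ (Fin m), uE ≠ 0 → ‖T uE‖ < δ * ‖uE‖ := by
    intro uE hne
    have hu : (WithLp.equiv 2 (Fin m → ℂ)) uE ≠ 0 := by
      intro h
      apply hne
      have := congrArg (WithLp.equiv 2 (Fin m → ℂ)).symm h
      simpa using this
    have h2 := key2 _ hu
    have hTn : ‖T uE‖ ^ 2
        = (star (G *ᵥ (WithLp.equiv 2 (Fin m → ℂ) uE)) ⬝ᵥ
            (G *ᵥ (WithLp.equiv 2 (Fin m → ℂ) uE))).re := by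
      rw [hTapp, norm_sq_euclid]
      simp
    have hun : ‖uE‖ ^ 2 = (star ((WithLp.equiv 2 (Fin m → ℂ)) uE) ⬝ᵥ
        ((WithLp.equiv 2 (Fin m → ℂ)) uE)).re := norm_sq_euclid uE
    have hlt : ‖T uE‖ ^ 2 < (δ * ‖uE‖) ^ 2 := by
      rw [hTn, mul_pow, hun]
      exact h2
    exact lt_of_pow_lt_pow_left₀ 2 (by positivity) hlt
  obtain ⟨u₀, hu₀K, hmax⟩ := (isCompact_closedBall (0 : EuclideanSpace ℂ (Fin m)) 1).exists_isMaxOn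
    (Set.nonempty_of_mem (Metric.mem_closedBall_self zero_le_one))
    (T.continuous.norm.continuousOn)
  have hu₀δ : ‖T u₀‖ < δ := by
    by_cases h0 : u₀ = 0
    · rw [h0]
      simpa using hδ
    · have hs := hstrict u₀ h0
      have hle : ‖u₀‖ ≤ 1 := by rwa [Metric.mem_closedBall, dist_zero_right] at hu₀K
      nlinarith [norm_nonneg (T u₀)]
  have hTnorm : ‖T‖ ≤ ‖T u₀‖ := by
    apply ContinuousLinearMap.opNorm_le_bound _ (norm_nonneg _)
    intro z
    rcases eq_or_ne z 0 with rfl | hz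
    · simp
    · have hzpos : 0 < ‖z‖ := norm_pos_iff.2 hz
      have hz' : ((‖z‖⁻¹ : ℝ) : ℂ) • z ∈ Metric.closedBall (0 : EuclideanSpace ℂ (Fin m)) 1 := by
        rw [Metric.mem_closedBall, dist_zero_right, norm_smul]
        rw [_root_.Complex.norm_real, Real.norm_eq_abs, _root_.abs_of_nonneg (inv_nonneg.2 (norm_nonneg z))]
        rw [inv_mul_cancel₀ hzpos.ne']
      have h1 : ‖T (((‖z‖⁻¹ : ℝ):ℂ) • z)‖ ≤ ‖T u₀‖ := hmax hz'
      rw [_root_.map_smul, norm_smul, _root_.Complex.norm_real, Real.norm_eq_abs,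
        _root_.abs_of_nonneg (inv_nonneg.2 (norm_nonneg z))] at h1
      calc ‖T z‖ = ‖z‖ * (‖z‖⁻¹ * ‖T z‖) := by field_simp
        _ ≤ ‖z‖ * ‖T u₀‖ := mul_le_mul_of_nonneg_left h1 (norm_nonneg _)
        _ = ‖T u₀‖ * ‖z‖ := mul_comm _ _
  linarith
end

section
/- Joint congruence normal form (Lemma 5): Let 0 < ν < 2 and φ = (π/2)(ν−1). Let Δ, Σ ∈ ℂ^{2×2} be Hermitian and suppose det Δ < 0 (the determinant of a Hermitian matrix is real). Then there exist an invertible matrix T ∈ ℂ^{2×2} and real numbers α, β, γ with α ≤ γ such that Δ = T*Δ₀T and Σ = T*Σ₀T, where Δ₀ = [[0, e^{iφ}],[e^{−iφ}, 0]] and Σ₀ = [[α, β e^{iφ}],[β e^{−iφ}, γ]]. -/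
open Matrix Complex
open scoped Matrix Kronecker ComplexOrder

noncomputable def Kmat : Matrix (Fin 2) (Fin 2) ℂ := !![1, 0; 0, -1]


/-- transfer congruence along an explicit invertible L -/
lemma transfer {Δ Δ' L L' : Matrix (Fin 2) (Fin 2) ℂ} (hLL' : L * L' = 1)
    (hΔ' : Δ' = Lᴴ * Δ * L)
    (h : ∃ R, IsUnit R ∧ Δ' = Rᴴ * Kmat * R) :
    ∃ R, IsUnit R ∧ Δ = Rᴴ * Kmat * R := by
  obtain ⟨R, hR, hRe⟩ := h
  have hL'L : L' * L = 1 := mul_eq_one_comm.mp hLL'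
  have hL'u : IsUnit L' := by
    rw [Matrix.isUnit_iff_isUnit_det]
    exact IsUnit.of_mul_eq_one L.det (by rw [mul_comm, ← Matrix.det_mul, hLL', Matrix.det_one])
  refine ⟨R * L', hR.mul hL'u, ?_⟩
  have : Δ = L'ᴴ * Δ' * L' := by
    rw [hΔ', show L'ᴴ * (Lᴴ * Δ * L) * L' = (L * L')ᴴ * Δ * (L * L') from by
      simp [Matrix.conjTranspose_mul, Matrix.mul_assoc], hLL']
    simp
  rw [this, hRe, Matrix.conjTranspose_mul]
  noncomm_ring [Matrix.mul_assoc]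


lemma congK_pos (Δ : Matrix (Fin 2) (Fin 2) ℂ) (hΔ : Δ.IsHermitian)
    (hdet : Δ.det < 0) (ha : 0 < (Δ 0 0).re) :
    ∃ R, IsUnit R ∧ Δ = Rᴴ * Kmat * R := by
  set a : ℝ := (Δ 0 0).re with haa
  set c : ℝ := (Δ 1 1).re with hcc
  set z : ℂ := Δ 0 1 with hzz
  have h00 : Δ 0 0 = (a : ℂ) := (hΔ.coe_re_apply_self 0).symm
  have h11 : Δ 1 1 = (c : ℂ) := (hΔ.coe_re_apply_self 1).symm
  have h10 : Δ 1 0 = (starRingEnd ℂ) z := by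
    conv_lhs => rw [← hΔ.eq]
    simp [Matrix.conjTranspose_apply, hzz]
  have hdet2 : Δ.det = ((a * c - Complex.normSq z : ℝ) : ℂ) := by
    rw [Matrix.det_fin_two, h00, h11, h10]
    push_cast
    rw [Complex.mul_conj]
  have hac : a * c - Complex.normSq z < 0 := by
    rw [hdet2] at hdet
    exact_mod_cast hdet
  set d : ℝ := c - Complex.normSq z / a with hdd
  have hd : d < 0 := by
    have : a * d < 0 := by
      rw [hdd]; field_simp
      linarith
    nlinarith
  have haC : (a : ℂ) ≠ 0 := Complex.ofReal_ne_zero.mpr (ne_of_gt ha)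
  have hsq : ((Real.sqrt a : ℝ) : ℂ) * ((Real.sqrt a : ℝ) : ℂ) = (a : ℂ) := by
    norm_cast; exact Real.mul_self_sqrt ha.le
  have hsqd : ((Real.sqrt (-d) : ℝ) : ℂ) * ((Real.sqrt (-d) : ℝ) : ℂ) = ((-d : ℝ) : ℂ) := by
    norm_cast; exact Real.mul_self_sqrt (by linarith)
  have hzc : (starRingEnd ℂ) z * z = ((Complex.normSq z : ℝ) : ℂ) :=
    (Complex.normSq_eq_conj_mul_self).symm
  have hdC : (d : ℂ) = (c : ℂ) - ((Complex.normSq z : ℝ) : ℂ) / (a : ℂ) := by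
    rw [hdd]; push_cast; ring
  refine ⟨!![(Real.sqrt a : ℂ), (Real.sqrt a / a) * z; 0, (Real.sqrt (-d) : ℂ)], ?_, ?_⟩
  · rw [Matrix.isUnit_iff_isUnit_det]
    have h1 : ((Real.sqrt a : ℝ) : ℂ) ≠ 0 :=
      Complex.ofReal_ne_zero.mpr (ne_of_gt (Real.sqrt_pos.mpr ha))
    have h2 : ((Real.sqrt (-d) : ℝ) : ℂ) ≠ 0 :=
      Complex.ofReal_ne_zero.mpr (ne_of_gt (Real.sqrt_pos.mpr (by linarith)))
    simp [Matrix.det_fin_two, isUnit_iff_ne_zero, h1, h2]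
  · ext i j
    fin_cases i <;> fin_cases j <;>
      simp [Matrix.mul_apply, Fin.sum_univ_two, Matrix.conjTranspose_apply, Kmat, h00, h11, h10]
    · norm_cast
      rw [Real.mul_self_sqrt ha.le]
    · show z = _
      field_simp
      linear_combination -z * hsq
    · field_simp
      linear_combination -(starRingEnd ℂ) z * hsq
    · have hadC : (a : ℂ) * (d : ℂ) = (a : ℂ) * (c : ℂ) - ((Complex.normSq z : ℝ) : ℂ) := by
        have hadR : a * d = a * c - Complex.normSq z := by
          rw [hdd]; field_simp
        exact_mod_cast congrArg (Complex.ofReal) hadR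
      rw [hsqd]
      push_cast
      rw [show (↑(Real.sqrt a)/(↑a:ℂ)) * (starRingEnd ℂ) z * ((↑(Real.sqrt a):ℂ)/↑a * z)
          = ((↑(Real.sqrt a):ℂ) * ↑(Real.sqrt a)) * ((starRingEnd ℂ) z * z)/((↑a:ℂ)*↑a) from by ring,
        hsq, hzc]
      field_simp
      linear_combination -hadC


lemma congK_ne (Δ : Matrix (Fin 2) (Fin 2) ℂ) (hΔ : Δ.IsHermitian)
    (hdet : Δ.det < 0) (ha : (Δ 0 0).re ≠ 0) :
    ∃ R, IsUnit R ∧ Δ = Rᴴ * Kmat * R := by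
  rcases ha.lt_or_gt with h | h
  · -- negative pivot: use -Δ
    have hherm : (-Δ).IsHermitian := hΔ.neg
    have hdet' : (-Δ).det < 0 := by
      rwa [Matrix.det_neg, Fintype.card_fin, show ((-1 : ℂ))^2 = 1 by ring, one_mul]
    have ha' : 0 < ((-Δ) 0 0).re := by
      simp only [Matrix.neg_apply, Complex.neg_re]
      linarith
    obtain ⟨R, hR, hRe⟩ := congK_pos (-Δ) hherm hdet' ha'
    have hS : IsUnit (!![0, 1; 1, 0] : Matrix (Fin 2) (Fin 2) ℂ) := by
      rw [Matrix.isUnit_iff_isUnit_det, Matrix.det_fin_two]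
      simp
    refine ⟨!![0, 1; 1, 0] * R, hS.mul hR, ?_⟩
    have hSKS : (!![0, 1; 1, 0] : Matrix (Fin 2) (Fin 2) ℂ)ᴴ * Kmat * !![0, 1; 1, 0] = -Kmat := by
      ext i j
      fin_cases i <;> fin_cases j <;>
        simp [Matrix.mul_apply, Fin.sum_univ_two, Matrix.conjTranspose_apply, Kmat]
    have : Δ = -(-Δ) := by simp
    rw [this, hRe, Matrix.conjTranspose_mul]
    calc -(Rᴴ * Kmat * R) = Rᴴ * (-Kmat) * R := by noncomm_ring
      _ = Rᴴ * (!![0, 1; 1, 0]ᴴ * Kmat * !![0, 1; 1, 0]) * R := by rw [hSKS]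
      _ = Rᴴ * !![0, 1; 1, 0]ᴴ * Kmat * (!![0, 1; 1, 0] * R) := by
          simp only [Matrix.mul_assoc]
  · exact congK_pos Δ hΔ hdet h

lemma congK_diag (Δ : Matrix (Fin 2) (Fin 2) ℂ) (hΔ : Δ.IsHermitian)
    (hdet : Δ.det < 0) (h : (Δ 0 0).re ≠ 0 ∨ (Δ 1 1).re ≠ 0) :
    ∃ R, IsUnit R ∧ Δ = Rᴴ * Kmat * R := by
  rcases h with h | h
  · exact congK_ne Δ hΔ hdet h
  · set S : Matrix (Fin 2) (Fin 2) ℂ := !![0, 1; 1, 0] with hSdef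
    have hSS : S * S = 1 := by
      ext i j
      fin_cases i <;> fin_cases j <;>
        simp [Matrix.mul_apply, Fin.sum_univ_two, hSdef, Matrix.one_apply]
    have hherm : (Sᴴ * Δ * S).IsHermitian := Matrix.isHermitian_conjTranspose_mul_mul S hΔ
    have hdetS : Sᴴ.det * S.det = 1 := by
      simp [hSdef, Matrix.det_fin_two]
    have hdet' : (Sᴴ * Δ * S).det < 0 := by
      rw [Matrix.det_mul, Matrix.det_mul]
      calc Sᴴ.det * Δ.det * S.det = Sᴴ.det * S.det * Δ.det := by ring
        _ = Δ.det := by rw [hdetS, one_mul]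
        _ < 0 := hdet
    have ha' : ((Sᴴ * Δ * S) 0 0).re ≠ 0 := by
      have : (Sᴴ * Δ * S) 0 0 = Δ 1 1 := by
        simp [Matrix.mul_apply, Fin.sum_univ_two, hSdef, Matrix.conjTranspose_apply]
      rw [this]; exact h
    exact transfer hSS rfl (congK_ne _ hherm hdet' ha')

lemma congK (Δ : Matrix (Fin 2) (Fin 2) ℂ) (hΔ : Δ.IsHermitian)
    (hdet : Δ.det < 0) :
    ∃ R, IsUnit R ∧ Δ = Rᴴ * Kmat * R := by
  by_cases h : (Δ 0 0).re ≠ 0 ∨ (Δ 1 1).re ≠ 0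
  · exact congK_diag Δ hΔ hdet h
  push_neg at h
  obtain ⟨h0, h1⟩ := h
  have h00 : Δ 0 0 = 0 := by
    rw [← hΔ.coe_re_apply_self 0]; rw [RCLike.re_to_complex, h0]; simp
  have h11 : Δ 1 1 = 0 := by
    rw [← hΔ.coe_re_apply_self 1]; rw [RCLike.re_to_complex, h1]; simp
  have h10 : Δ 1 0 = (starRingEnd ℂ) (Δ 0 1) := by
    conv_lhs => rw [← hΔ.eq]
    simp [Matrix.conjTranspose_apply]
  have hz : Δ 0 1 ≠ 0 := by
    intro hzero
    rw [Matrix.det_fin_two, h00, h11, hzero] at hdet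
    simp at hdet
  have hz2 : (Δ 0 1).re ≠ 0 ∨ (Δ 0 1).im ≠ 0 := by
    by_contra hcon
    push_neg at hcon
    exact hz (Complex.ext hcon.1 hcon.2)
  rcases hz2 with hre | him
  · set L : Matrix (Fin 2) (Fin 2) ℂ := !![1, 0; 1, 1] with hLdef
    have hLL' : L * !![1, 0; -1, 1] = 1 := by
      ext i j
      fin_cases i <;> fin_cases j <;>
        simp [Matrix.mul_apply, Fin.sum_univ_two, hLdef, Matrix.one_apply]
    have hherm : (Lᴴ * Δ * L).IsHermitian := Matrix.isHermitian_conjTranspose_mul_mul L hΔ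
    have hdet' : (Lᴴ * Δ * L).det < 0 := by
      rw [Matrix.det_mul, Matrix.det_mul]
      have hdL : L.det = 1 := by simp [hLdef, Matrix.det_fin_two]
      have hdLH : Lᴴ.det = 1 := by simp [hLdef, Matrix.det_fin_two]
      rw [hdL, hdLH, one_mul, mul_one]
      exact hdet
    have ha' : ((Lᴴ * Δ * L) 0 0).re ≠ 0 := by
      have hentry : (Lᴴ * Δ * L) 0 0 = Δ 0 1 + (starRingEnd ℂ) (Δ 0 1) := by
        simp [Matrix.mul_apply, Fin.sum_univ_two, Matrix.conjTranspose_apply, hLdef,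
          h00, h11, h10]
        ring
      rw [hentry]
      simp only [Complex.add_re, Complex.conj_re]
      intro hcon
      exact hre (by linarith)
    exact transfer hLL' rfl (congK_ne _ hherm hdet' ha')
  · set L : Matrix (Fin 2) (Fin 2) ℂ := !![1, 0; Complex.I, 1] with hLdef
    have hLL' : L * !![1, 0; -Complex.I, 1] = 1 := by
      ext i j
      fin_cases i <;> fin_cases j <;>
        simp [Matrix.mul_apply, Fin.sum_univ_two, hLdef, Matrix.one_apply]
    have hherm : (Lᴴ * Δ * L).IsHermitian := Matrix.isHermitian_conjTranspose_mul_mul L hΔ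
    have hdet' : (Lᴴ * Δ * L).det < 0 := by
      rw [Matrix.det_mul, Matrix.det_mul]
      have hdL : L.det = 1 := by simp [hLdef, Matrix.det_fin_two]
      have hdLH : Lᴴ.det = 1 := by simp [hLdef, Matrix.det_fin_two]
      rw [hdL, hdLH, one_mul, mul_one]
      exact hdet
    have ha' : ((Lᴴ * Δ * L) 0 0).re ≠ 0 := by
      have hentry : (Lᴴ * Δ * L) 0 0
          = Δ 0 1 * Complex.I + (starRingEnd ℂ) Complex.I * (starRingEnd ℂ) (Δ 0 1) := by
        simp [Matrix.mul_apply, Fin.sum_univ_two, Matrix.conjTranspose_apply, hLdef,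
          h00, h11, h10]
        ring
      rw [hentry]
      simp only [Complex.add_re, Complex.mul_re, Complex.conj_re, Complex.conj_im,
        Complex.I_re, Complex.I_im, Complex.conj_I, Complex.neg_re, Complex.neg_im]
      intro hcon
      apply him
      nlinarith [hcon]
    exact transfer hLL' rfl (congK_ne _ hherm hdet' ha')


/-- M = D F V : the change of basis from the K-frame to the Δ₀-frame. -/
noncomputable def Mmat (φ : ℝ) (u : ℂ) : Matrix (Fin 2) (Fin 2) ℂ :=
  !![((Real.sqrt 2 : ℝ) : ℂ)⁻¹ * Complex.exp ((φ : ℂ)/2 * Complex.I),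
     ((Real.sqrt 2 : ℝ) : ℂ)⁻¹ * Complex.exp ((φ : ℂ)/2 * Complex.I) * u;
     ((Real.sqrt 2 : ℝ) : ℂ)⁻¹ * Complex.exp (-((φ : ℂ)/2) * Complex.I),
     -(((Real.sqrt 2 : ℝ) : ℂ)⁻¹ * Complex.exp (-((φ : ℂ)/2) * Complex.I) * u)]

section Mfacts
variable (φ : ℝ)

lemma hconj_ep : (starRingEnd ℂ) (Complex.exp ((φ : ℂ)/2 * Complex.I))
    = Complex.exp (-((φ : ℂ)/2) * Complex.I) := by
  rw [← Complex.exp_conj]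
  congr 1
  simp only [_root_.map_mul, map_div₀, Complex.conj_ofReal, Complex.conj_I, map_ofNat]
  ring

lemma hconj_em : (starRingEnd ℂ) (Complex.exp (-((φ : ℂ)/2) * Complex.I))
    = Complex.exp ((φ : ℂ)/2 * Complex.I) := by
  rw [← Complex.exp_conj]
  congr 1
  simp only [map_neg, map_div₀, _root_.map_mul, Complex.conj_ofReal, Complex.conj_I, map_ofNat]
  ring

lemma h_pm : Complex.exp ((φ : ℂ)/2 * Complex.I) * Complex.exp (-((φ : ℂ)/2) * Complex.I) = 1 := by
  rw [← Complex.exp_add]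
  norm_num

lemma h_pp : Complex.exp ((φ : ℂ)/2 * Complex.I) * Complex.exp ((φ : ℂ)/2 * Complex.I)
    = Complex.exp ((φ : ℂ) * Complex.I) := by
  rw [← Complex.exp_add]
  ring_nf

lemma h_mm : Complex.exp (-((φ : ℂ)/2) * Complex.I) * Complex.exp (-((φ : ℂ)/2) * Complex.I)
    = Complex.exp (-(φ : ℂ) * Complex.I) := by
  rw [← Complex.exp_add]
  ring_nf

lemma h_s : (((Real.sqrt 2 : ℝ) : ℂ))⁻¹ * (((Real.sqrt 2 : ℝ) : ℂ))⁻¹ = 2⁻¹ := by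
  rw [← mul_inv]
  norm_cast
  rw [Real.mul_self_sqrt (by norm_num)]
  norm_num

end Mfacts

section Mexplicit

variable (φ : ℝ) (u : ℂ)

/-- Explicit form of `(Mmat φ u)ᴴ`. -/
lemma Mmat_conjT :
    (Mmat φ u)ᴴ =
      !![((Real.sqrt 2 : ℝ) : ℂ)⁻¹ * Complex.exp (-((φ : ℂ)/2) * Complex.I),
         ((Real.sqrt 2 : ℝ) : ℂ)⁻¹ * Complex.exp ((φ : ℂ)/2 * Complex.I);
         ((Real.sqrt 2 : ℝ) : ℂ)⁻¹ * Complex.exp (-((φ : ℂ)/2) * Complex.I) * (starRingEnd ℂ) u,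
         -(((Real.sqrt 2 : ℝ) : ℂ)⁻¹ * Complex.exp ((φ : ℂ)/2 * Complex.I) * (starRingEnd ℂ) u)] := by
  ext i j
  fin_cases i <;> fin_cases j <;>
    · simp only [Mmat, Matrix.conjTranspose_apply, Fin.zero_eta, Fin.mk_one, Fin.isValue,
        Matrix.cons_val', Matrix.cons_val_zero, Matrix.cons_val_one, Matrix.head_cons,
        Matrix.head_fin_const, Matrix.empty_val', Matrix.cons_val_fin_one, Matrix.of_apply, RCLike.star_def,
        _root_.map_mul, map_inv₀, map_neg, Complex.conj_ofReal, hconj_ep φ, hconj_em φ]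

lemma Delta0_explicit :
    Delta0 φ = !![0, Complex.exp ((φ : ℂ)/2 * Complex.I) * Complex.exp ((φ : ℂ)/2 * Complex.I);
      Complex.exp (-((φ : ℂ)/2) * Complex.I) * Complex.exp (-((φ : ℂ)/2) * Complex.I), 0] := by
  rw [Delta0, h_pp φ, h_mm φ]

lemma Sigma0_explicit (α β γ : ℝ) :
    Sigma0 φ α β γ = !![((α : ℝ) : ℂ),
      (β : ℂ) * (Complex.exp ((φ : ℂ)/2 * Complex.I) * Complex.exp ((φ : ℂ)/2 * Complex.I));
      (β : ℂ) * (Complex.exp (-((φ : ℂ)/2) * Complex.I) * Complex.exp (-((φ : ℂ)/2) * Complex.I)),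
      ((γ : ℝ) : ℂ)] := by
  rw [Sigma0, h_pp φ, h_mm φ]

end Mexplicit

lemma Mmat_delta (φ : ℝ) (u : ℂ) (hu : (starRingEnd ℂ) u * u = 1) :
    (Mmat φ u)ᴴ * Delta0 φ * Mmat φ u = Kmat := by
  rw [Mmat_conjT φ u, Delta0_explicit φ, Mmat]
  set s : ℂ := ((Real.sqrt 2 : ℝ) : ℂ)⁻¹ with hsdef
  set ep : ℂ := Complex.exp ((φ : ℂ)/2 * Complex.I) with hepdef
  set em : ℂ := Complex.exp (-((φ : ℂ)/2) * Complex.I) with hemdef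
  set v : ℂ := (starRingEnd ℂ) u with hvdef
  have h1 : ep * em = 1 := h_pm φ
  have h4 : s * s = 2⁻¹ := h_s
  have h5 : v * u = 1 := hu
  ext i j
  fin_cases i <;> fin_cases j
  · simp [Matrix.mul_apply, Fin.sum_univ_two, Kmat]
    linear_combination (2*s*s*(ep*em+1))*h1 + 2*h4
  · simp [Matrix.mul_apply, Fin.sum_univ_two, Kmat]
    linear_combination (0:ℂ)*h1
  · simp [Matrix.mul_apply, Fin.sum_univ_two, Kmat]
    linear_combination (0:ℂ)*h1
  · simp [Matrix.mul_apply, Fin.sum_univ_two, Kmat]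
    linear_combination (-(2*u*v*s*s*(ep*em+1)))*h1 - 2*u*v*h4 - h5

lemma Mmat_sigma (φ : ℝ) (u : ℂ) (hu : (starRingEnd ℂ) u * u = 1) (p q t : ℝ) :
    (Mmat φ u)ᴴ * Sigma0 φ ((p+q)/2 + t) ((p-q)/2) ((p+q)/2 - t) * Mmat φ u
      = !![((p:ℝ):ℂ), (t:ℂ) * u; (t:ℂ) * (starRingEnd ℂ) u, ((q:ℝ):ℂ)] := by
  rw [Mmat_conjT φ u, Sigma0_explicit φ _ _ _, Mmat]
  set s : ℂ := ((Real.sqrt 2 : ℝ) : ℂ)⁻¹ with hsdef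
  set ep : ℂ := Complex.exp ((φ : ℂ)/2 * Complex.I) with hepdef
  set em : ℂ := Complex.exp (-((φ : ℂ)/2) * Complex.I) with hemdef
  set v : ℂ := (starRingEnd ℂ) u with hvdef
  have h1 : ep * em = 1 := h_pm φ
  have h4 : s * s = 2⁻¹ := h_s
  have h5 : v * u = 1 := hu
  ext i j
  fin_cases i <;> fin_cases j
  · simp [Matrix.mul_apply, Fin.sum_univ_two]
    push_cast
    linear_combination (s*s*((p:ℂ)+(q:ℂ)))*h1 + (s*s*((p:ℂ)-(q:ℂ))*(ep*em+1))*h1 + 2*(p:ℂ)*h4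
  · simp [Matrix.mul_apply, Fin.sum_univ_two]
    push_cast
    linear_combination (2*(t:ℂ)*s*s*u)*h1 + 2*(t:ℂ)*u*h4
  · simp [Matrix.mul_apply, Fin.sum_univ_two]
    push_cast
    linear_combination (2*(t:ℂ)*s*s*v)*h1 + 2*(t:ℂ)*v*h4
  · simp [Matrix.mul_apply, Fin.sum_univ_two]
    push_cast
    linear_combination (s*s*u*v*((p:ℂ)+(q:ℂ)) - s*s*u*v*((p:ℂ)-(q:ℂ))*(ep*em+1))*h1
      + 2*(q:ℂ)*u*v*h4 + (q:ℂ)*h5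

lemma Mmat_unit (φ : ℝ) {u : ℂ} (hu : u ≠ 0) : IsUnit (Mmat φ u) := by
  rw [Matrix.isUnit_iff_isUnit_det, Matrix.det_fin_two]
  have : (Mmat φ u) 0 0 * (Mmat φ u) 1 1 - (Mmat φ u) 0 1 * (Mmat φ u) 1 0
      = -(2 * (((Real.sqrt 2 : ℝ) : ℂ)⁻¹ * ((Real.sqrt 2 : ℝ) : ℂ)⁻¹)
        * (Complex.exp ((φ : ℂ)/2 * Complex.I) * Complex.exp (-((φ : ℂ)/2) * Complex.I)) * u) := by
    simp [Mmat]
    ring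
  rw [this, h_pm φ, h_s]
  simp [isUnit_iff_ne_zero, hu]

/-- Joint congruence normal form (Lemma 5). -/
theorem joint_congruence_normal_form (ν φ : ℝ)
    (hν : 0 < ν) (hν2 : ν < 2) (hφ : φ = (Real.pi / 2) * (ν - 1))
    (Δ Sig : Matrix (Fin 2) (Fin 2) ℂ)
    (hΔ : Δ.IsHermitian) (hSig : Sig.IsHermitian)
    (hdet : Δ.det < 0) :
    ∃ (T : Matrix (Fin 2) (Fin 2) ℂ) (α β γ : ℝ), IsUnit T ∧ α ≤ γ ∧
      Δ = Tᴴ * Delta0 φ * T ∧ Sig = Tᴴ * Sigma0 φ α β γ * T := by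
  obtain ⟨R, hRu, hRe⟩ := congK Δ hΔ hdet
  have hRdet : IsUnit R.det := (Matrix.isUnit_iff_isUnit_det R).mp hRu
  set Sg1 : Matrix (Fin 2) (Fin 2) ℂ := (R⁻¹)ᴴ * Sig * R⁻¹ with hSg1def
  have hSg1herm : Sg1.IsHermitian := Matrix.isHermitian_conjTranspose_mul_mul _ hSig
  have hback : Rᴴ * Sg1 * R = Sig := by
    rw [hSg1def, Matrix.conjTranspose_nonsing_inv]
    have e1 : Rᴴ * ((Rᴴ)⁻¹ * Sig * R⁻¹) * R = (Rᴴ * (Rᴴ)⁻¹) * Sig * (R⁻¹ * R) := by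
      simp only [Matrix.mul_assoc]
    rw [e1, Matrix.mul_nonsing_inv _ (by simpa using hRdet), Matrix.nonsing_inv_mul _ hRdet]
    simp
  set p : ℝ := (Sg1 0 0).re with hpdef
  set q : ℝ := (Sg1 1 1).re with hqdef
  set w : ℂ := Sg1 0 1 with hwdef
  set t : ℝ := -‖w‖ with htdef
  set u : ℂ := if w = 0 then 1 else -(w / ((‖w‖ : ℝ) : ℂ)) with hudef
  have hu0 : u ≠ 0 := by
    rcases eq_or_ne w 0 with h | h
    · simp [hudef, h]
    · simp only [hudef, if_neg h]
      intro hcon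
      apply h
      have habs : ((‖w‖ : ℝ) : ℂ) ≠ 0 := by
        simpa using (norm_ne_zero_iff.mpr h)
      field_simp at hcon
      simpa using hcon
  have hu : (starRingEnd ℂ) u * u = 1 := by
    rcases eq_or_ne w 0 with h | h
    · simp [hudef, h]
    · simp only [hudef, if_neg h, map_neg, map_div₀, Complex.conj_ofReal]
      have habs : ((‖w‖ : ℝ) : ℂ) ≠ 0 := by
        simpa using (norm_ne_zero_iff.mpr h)
      field_simp
      rw [show (starRingEnd ℂ) w * w = ((Complex.normSq w : ℝ) : ℂ) from
        Complex.normSq_eq_conj_mul_self.symm]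
      norm_cast
      rw [← Complex.sq_norm]
      try ring
  have htu : (t : ℂ) * u = w := by
    rcases eq_or_ne w 0 with h | h
    · simp [hudef, htdef, h]
    · simp only [hudef, htdef, if_neg h]
      have habs : ((‖w‖ : ℝ) : ℂ) ≠ 0 := by
        simpa using (norm_ne_zero_iff.mpr h)
      push_cast
      field_simp
  have hw10 : Sg1 1 0 = (starRingEnd ℂ) w := by
    conv_lhs => rw [← hSg1herm.eq]
    simp [Matrix.conjTranspose_apply, hwdef]
  have hSg1eq : !![((p:ℝ):ℂ), (t:ℂ) * u; (t:ℂ) * (starRingEnd ℂ) u, ((q:ℝ):ℂ)] = Sg1 := by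
    ext i j
    fin_cases i <;> fin_cases j
    · simpa using (hSg1herm.coe_re_apply_self 0)
    · simpa using htu
    · show (t:ℂ) * (starRingEnd ℂ) u = Sg1 1 0
      rw [hw10, ← htu, RingHom.map_mul, Complex.conj_ofReal]
    · simpa using (hSg1herm.coe_re_apply_self 1)
  refine ⟨Mmat φ u * R, (p+q)/2 + t, (p-q)/2, (p+q)/2 - t,
    (Mmat_unit φ hu0).mul hRu, by
      have : 0 ≤ ‖w‖ := norm_nonneg w
      rw [htdef]; linarith, ?_, ?_⟩
  · rw [Matrix.conjTranspose_mul]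
    calc Δ = Rᴴ * Kmat * R := hRe
      _ = Rᴴ * ((Mmat φ u)ᴴ * Delta0 φ * Mmat φ u) * R := by rw [Mmat_delta φ u hu]
      _ = Rᴴ * (Mmat φ u)ᴴ * Delta0 φ * (Mmat φ u * R) := by simp only [Matrix.mul_assoc]
  · rw [Matrix.conjTranspose_mul]
    calc Sig = Rᴴ * Sg1 * R := hback.symm
      _ = Rᴴ * ((Mmat φ u)ᴴ * Sigma0 φ ((p+q)/2 + t) ((p-q)/2) ((p+q)/2 - t) * Mmat φ u) * R := by
          rw [Mmat_sigma φ u hu p q t, hSg1eq]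
      _ = Rᴴ * (Mmat φ u)ᴴ * Sigma0 φ ((p+q)/2 + t) ((p-q)/2) ((p+q)/2 - t) * (Mmat φ u * R) := by
          simp only [Matrix.mul_assoc]
end

section
/- Hermitian 2×2 factorization (Lemma 6): Let 0 < ν < 2, φ = (π/2)(ν−1), and Q = diag(1, i e^{iφ}). Every Hermitian matrix Y ∈ ℂ^{2×2} admits real numbers α, β, γ and a real 2×2 matrix Z with det Z = 1 such that, writing L = Q*ZQ, one has Y = L*·[[α, β e^{iφ}],[β e^{−iφ}, γ]]·L. Moreover α and γ can be taken to be the two eigenvalues of the Hermitian matrix Y₀ = Q·(Y − β[[0, e^{iφ}],[e^{−iφ}, 0]])·Q* (which has real entries). -/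
open Matrix Complex
open scoped Matrix Kronecker ComplexOrder

lemma real_sym_diag (a u d : ℝ) :
    ∃ (α γ : ℝ) (Z : Matrix (Fin 2) (Fin 2) ℝ), Z.det = 1 ∧
      Zᵀ * !![α,0;0,γ] * Z = !![a,u;u,d] ∧ α + γ = a + d ∧ α * γ = a*d - u^2 := by
  by_cases hu : u = 0
  · refine ⟨a, d, 1, by simp, ?_, by ring, by rw [hu]; ring⟩
    subst hu
    ext i j
    fin_cases i <;> fin_cases j <;>
      simp [Matrix.mul_apply, Fin.sum_univ_two]
  · set p : ℝ := (a - d)/2 with hp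
    set m : ℝ := (a + d)/2 with hm
    set r : ℝ := Real.sqrt (p^2 + u^2) with hr
    have hr2 : r^2 = p^2 + u^2 := Real.sq_sqrt (by positivity)
    have hu2 : 0 < u^2 := lt_of_le_of_ne (sq_nonneg u) (Ne.symm (pow_ne_zero 2 hu))
    have hrpos : |p| < r := by
      rw [← Real.sqrt_sq_eq_abs]
      apply Real.sqrt_lt_sqrt (by positivity)
      linarith
    have hrp : 0 < r - p := by linarith [le_abs_self p, hrpos]
    have hn2pos : 0 < u^2 + (r-p)^2 := by positivity
    set n : ℝ := Real.sqrt (u^2 + (r-p)^2) with hn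
    have hn2 : n^2 = u^2 + (r-p)^2 := Real.sq_sqrt hn2pos.le
    have hnpos : 0 < n := Real.sqrt_pos.mpr hn2pos
    have hnne : n ≠ 0 := ne_of_gt hnpos
    have key : (r - p) * (r + p) = u^2 := by nlinarith
    have had : m^2 - p^2 = a*d := by rw [hm, hp]; ring
    refine ⟨m + r, m - r, !![u/n, (r-p)/n; -((r-p)/n), u/n], ?_, ?_, by rw [hm]; ring,
      by linear_combination had - hr2⟩
    · rw [Matrix.det_fin_two_of]
      field_simp
      linear_combination -hn2
    · ext i j
      fin_cases i <;> fin_cases j <;>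
          simp only [Matrix.mul_apply, Fin.sum_univ_two, Matrix.transpose_apply,
            Matrix.cons_val', Matrix.cons_val_zero, Matrix.cons_val_one, Matrix.head_cons,
            Matrix.head_fin_const, Matrix.empty_val', Matrix.cons_val_fin_one, Fin.isValue,
            Matrix.of_apply, Fin.zero_eta, Fin.mk_one]
      · field_simp
        linear_combination -(r-p) * key - a * hn2
      · field_simp
        linear_combination u * key - u * hn2
      · field_simp
        linear_combination u * key - u * hn2
      · field_simp
        linear_combination (r-p) * key - d * hn2

lemma spectrum_fin_two' (M : Matrix (Fin 2) (Fin 2) ℂ) (α γ : ℂ)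
    (ht : M 0 0 + M 1 1 = α + γ) (hd : M 0 0 * M 1 1 - M 0 1 * M 1 0 = α * γ) :
    spectrum ℂ M = {α, γ} := by
  ext x
  rw [spectrum.mem_iff, Matrix.isUnit_iff_isUnit_det, isUnit_iff_ne_zero, not_ne_iff]
  have hcalc : (algebraMap ℂ (Matrix (Fin 2) (Fin 2) ℂ) x - M).det = (x - α) * (x - γ) := by
    rw [Matrix.det_fin_two]
    simp only [Matrix.sub_apply, Matrix.algebraMap_matrix_apply]
    norm_num
    linear_combination (-x) * ht + hd
  rw [hcalc, mul_eq_zero, sub_eq_zero, sub_eq_zero]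
  simp [Set.mem_insert_iff]

/-- Hermitian 2×2 factorization (Lemma 6). -/
theorem hermitian_two_by_two_factorization (ν φ : ℝ)
    (hν : 0 < ν) (hν2 : ν < 2) (hφ : φ = (Real.pi / 2) * (ν - 1))
    (Q : Matrix (Fin 2) (Fin 2) ℂ)
    (hQ : Q = !![1, 0; 0, Complex.I * Complex.exp ((φ : ℂ) * Complex.I)])
    (Y : Matrix (Fin 2) (Fin 2) ℂ) (hY : Y.IsHermitian) :
    ∃ (α β γ : ℝ) (Z : Matrix (Fin 2) (Fin 2) ℝ), Z.det = 1 ∧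
      Y = (Qᴴ * cmap Z * Q)ᴴ * Sigma0 φ α β γ * (Qᴴ * cmap Z * Q) ∧
      spectrum ℂ (Q * (Y - (β : ℂ) • Delta0 φ) * Qᴴ) = {(α : ℂ), (γ : ℂ)} := by
  set e : ℂ := Complex.exp ((φ:ℂ) * Complex.I) with he
  set e' : ℂ := Complex.exp (-(φ:ℂ) * Complex.I) with he'
  have hee : e * e' = 1 := by
    rw [he, he', ← Complex.exp_add]
    norm_num
  have hI : Complex.I * Complex.I = -1 := Complex.I_mul_I
  have hce : (starRingEnd ℂ) e = e' := by
    rw [he, he', ← Complex.exp_conj, _root_.map_mul, Complex.conj_I, Complex.conj_ofReal]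
    congr 1
    ring
  have hce' : (starRingEnd ℂ) e' = e := by
    rw [he, he', ← Complex.exp_conj, _root_.map_mul, Complex.conj_I, map_neg,
      Complex.conj_ofReal]
    congr 1
    ring
  have he'' : Complex.exp (-((φ:ℂ) * Complex.I)) = e' := by
    rw [he']
    congr 1
    ring
  set b : ℂ := Y 0 1 with hbdef
  set a : ℝ := (Y 0 0).re with ha
  set d : ℝ := (Y 1 1).re with hd
  set β : ℝ := (e' * b).re with hβ
  set u : ℝ := (e' * b).im with hu
  have hb : (β:ℂ) + (u:ℂ) * Complex.I = e' * b := Complex.re_add_im (e' * b)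
  have h00 : Y 0 0 = (a:ℂ) := (hY.coe_re_apply_self 0).symm
  have h11 : Y 1 1 = (d:ℂ) := (hY.coe_re_apply_self 1).symm
  have h10 : Y 1 0 = (starRingEnd ℂ) b := by
    rw [← hY.apply 1 0]
    rfl
  have hbc : (β:ℂ) - (u:ℂ) * Complex.I = e * (starRingEnd ℂ) b := by
    have h := congrArg (starRingEnd ℂ) hb
    simpa [map_add, _root_.map_mul, Complex.conj_I, Complex.conj_ofReal, hce', sub_eq_add_neg] using h
  obtain ⟨α, γ, Z, hdet, hZ, htr, hmul⟩ := real_sym_diag a u d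
  set S : Matrix (Fin 2) (Fin 2) ℂ := !![0, -Complex.I; Complex.I, 0] with hS
  have hdetC : (Z 0 0 : ℂ) * (Z 1 1 : ℂ) - (Z 0 1 : ℂ) * (Z 1 0 : ℂ) = 1 := by
    rw [Matrix.det_fin_two] at hdet
    exact_mod_cast hdet
  have hQQ : Q * Qᴴ = 1 := by
    ext i j
    fin_cases i <;> fin_cases j <;>
      simp [hQ, Matrix.mul_apply, Fin.sum_univ_two, Matrix.conjTranspose_apply,
        _root_.map_mul, Complex.conj_I, hce, he'', ← he] <;>
      first
      | ring1
      | linear_combination (-(Complex.I*Complex.I)) * hee - hI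
      | linear_combination (Complex.I*Complex.I) * hee + hI
  have key1 : Q * Sigma0 φ α β γ * Qᴴ = cmap !![α,0;0,γ] + (β:ℂ) • S := by
    ext i j
    fin_cases i <;> fin_cases j <;>
      simp [hQ, hS, Sigma0, cmap, Matrix.mul_apply, Fin.sum_univ_two,
        Matrix.conjTranspose_apply, _root_.map_mul, Complex.conj_I, hce, he'', neg_mul, ← he,
        Matrix.smul_apply, Matrix.add_apply, smul_eq_mul] <;>
      first
      | ring1
      | linear_combination (-(Complex.I)*(β:ℂ)) * hee
      | linear_combination (Complex.I*(β:ℂ)) * hee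
      | linear_combination (-(Complex.I*Complex.I)*(γ:ℂ)) * hee - (γ:ℂ) * hI
      | linear_combination ((Complex.I*Complex.I)*(γ:ℂ)) * hee + (γ:ℂ) * hI
  have key2 : (cmap Z)ᵀ * S * cmap Z = S := by
    ext i j
    fin_cases i <;> fin_cases j <;>
      simp [hS, cmap, Matrix.mul_apply, Fin.sum_univ_two, Matrix.transpose_apply] <;>
      first
      | ring1
      | linear_combination (-Complex.I) * hdetC
      | linear_combination Complex.I * hdetC
  have key3 : Qᴴ * S * Q = Delta0 φ := by
    ext i j
    fin_cases i <;> fin_cases j <;>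
      simp [hQ, hS, Delta0, Matrix.mul_apply, Fin.sum_univ_two,
        Matrix.conjTranspose_apply, _root_.map_mul, Complex.conj_I, hce, he'', neg_mul, ← he] <;>
      first
      | ring1
      | linear_combination (-e) * hI
      | linear_combination e * hI
      | linear_combination (-e') * hI
      | linear_combination e' * hI
  have key4 : Y = Qᴴ * cmap !![a,u;u,d] * Q + (β:ℂ) • Delta0 φ := by
    ext i j
    fin_cases i <;> fin_cases j <;>
      simp [hQ, Delta0, cmap, Matrix.mul_apply, Fin.sum_univ_two,
        Matrix.conjTranspose_apply, _root_.map_mul, Complex.conj_I, hce, he'', neg_mul, ← he,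
        Matrix.smul_apply, Matrix.add_apply, smul_eq_mul, h00, h11, h10, ← hbdef] <;>
      first
      | ring1
      | linear_combination (-b) * hee - e * hb
      | linear_combination b * hee + e * hb
      | linear_combination (-((starRingEnd ℂ) b)) * hee - e' * hbc
      | linear_combination ((starRingEnd ℂ) b) * hee + e' * hbc
      | linear_combination ((d:ℂ)*Complex.I*Complex.I) * hee + (d:ℂ) * hI
      | linear_combination (-((d:ℂ)*Complex.I*Complex.I)) * hee - (d:ℂ) * hI
  have hAh : (cmap Z)ᴴ = (cmap Z)ᵀ := by
    ext i j
    simp [cmap, Matrix.conjTranspose_apply, Matrix.transpose_apply, Complex.conj_ofReal]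
  have hZC : (cmap Z)ᵀ * cmap !![α,0;0,γ] * cmap Z = cmap !![a,u;u,d] := by
    ext i j
    have h := congrFun (congrFun hZ i) j
    fin_cases i <;> fin_cases j <;>
      · simp [Matrix.mul_apply, Fin.sum_univ_two] at h
        simp [cmap, Matrix.mul_apply, Fin.sum_univ_two, Matrix.transpose_apply]
        exact_mod_cast h
  have hLH : (Qᴴ * cmap Z * Q)ᴴ = Qᴴ * (cmap Z)ᵀ * Q := by
    rw [Matrix.conjTranspose_mul, Matrix.conjTranspose_mul,
      Matrix.conjTranspose_conjTranspose, hAh, Matrix.mul_assoc]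
  have mid : (cmap Z)ᵀ * (cmap !![α,0;0,γ] + (β:ℂ) • S) * cmap Z
      = cmap !![a,u;u,d] + (β:ℂ) • S := by
    rw [Matrix.mul_add, Matrix.add_mul, Matrix.mul_smul, Matrix.smul_mul, key2, hZC]
  refine ⟨α, β, γ, Z, hdet, ?_, ?_⟩
  · calc Y = Qᴴ * cmap !![a,u;u,d] * Q + (β:ℂ) • Delta0 φ := key4
    _ = Qᴴ * (cmap !![a,u;u,d] + (β:ℂ) • S) * Q := by
        rw [Matrix.mul_add, Matrix.add_mul, Matrix.mul_smul, Matrix.smul_mul, key3]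
    _ = Qᴴ * ((cmap Z)ᵀ * (cmap !![α,0;0,γ] + (β:ℂ) • S) * cmap Z) * Q := by rw [mid]
    _ = Qᴴ * ((cmap Z)ᵀ * (Q * Sigma0 φ α β γ * Qᴴ) * cmap Z) * Q := by rw [key1]
    _ = (Qᴴ * (cmap Z)ᵀ * Q) * Sigma0 φ α β γ * (Qᴴ * cmap Z * Q) := by
        simp only [Matrix.mul_assoc]
    _ = (Qᴴ * cmap Z * Q)ᴴ * Sigma0 φ α β γ * (Qᴴ * cmap Z * Q) := by rw [hLH]
  · have hYm : Y - (β:ℂ) • Delta0 φ = Qᴴ * cmap !![a,u;u,d] * Q := by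
      rw [key4, add_sub_cancel_right]
    have hconj : Q * (Y - (β:ℂ) • Delta0 φ) * Qᴴ = cmap !![a,u;u,d] := by
      rw [hYm]
      calc Q * (Qᴴ * cmap !![a,u;u,d] * Q) * Qᴴ
          = (Q * Qᴴ) * cmap !![a,u;u,d] * (Q * Qᴴ) := by simp only [Matrix.mul_assoc]
        _ = cmap !![a,u;u,d] := by rw [hQQ, Matrix.one_mul, Matrix.mul_one]
    rw [hconj]
    apply spectrum_fin_two'
    · show ((a:ℂ)) + ((d:ℂ)) = (α:ℂ) + (γ:ℂ)
      exact_mod_cast htr.symm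
    · show ((a:ℂ)) * ((d:ℂ)) - (u:ℂ) * (u:ℂ) = (α:ℂ) * (γ:ℂ)
      have : (α:ℂ) * γ = (a:ℂ) * d - (u:ℂ)^2 := by exact_mod_cast hmul
      linear_combination -this
end

section
/- Outer-product characterization of points on the twisted imaginary axis (Lemma 8, corrected to allow both signs of the real parameter): Let 0 < ν < 2, φ = (π/2)(ν−1), and let f, g ∈ ℂⁿ with g ≠ 0. Then e^{−iφ}·fg* + e^{iφ}·gf* = 0 (as an n×n complex matrix, where fg* denotes the outer product with entries f_j·conj(g_k)) if and only if there exists t ∈ ℝ such that f = t·e^{iπν/2}·g. (The paper states this with t = ω^ν, ω ∈ ℝ⁺; both signs of t must be allowed for the equivalence.) -/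
open Matrix Complex
open scoped Matrix Kronecker ComplexOrder

/-- Outer-product characterization of points on the twisted imaginary axis
(Lemma 8, corrected to allow both signs of the real parameter). -/
theorem outer_product_twisted_imaginary_axis {n : ℕ} (ν φ : ℝ)
    (hν : 0 < ν) (hν2 : ν < 2) (hφ : φ = (Real.pi / 2) * (ν - 1))
    (f g : Fin n → ℂ) (hg : g ≠ 0) :
    Complex.exp (-(φ : ℂ) * Complex.I) • Matrix.vecMulVec f (star g) +
      Complex.exp ((φ : ℂ) * Complex.I) • Matrix.vecMulVec g (star f) = 0 ↔
    ∃ t : ℝ, f = ((t : ℂ) * Complex.exp ((Real.pi * ν / 2 : ℝ) * Complex.I)) • g := by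
  have hI : Complex.exp (((Real.pi / 2 : ℝ) : ℂ) * Complex.I) = Complex.I := by
    rw [Complex.exp_mul_I]
    simp [← Complex.ofReal_cos, ← Complex.ofReal_sin]
  have hE : Complex.exp (((Real.pi * ν / 2 : ℝ) : ℂ) * Complex.I)
      = Complex.I * Complex.exp ((φ : ℂ) * Complex.I) := by
    rw [show ((Real.pi * ν / 2 : ℝ) : ℂ) * Complex.I
        = ((Real.pi / 2 : ℝ) : ℂ) * Complex.I + (φ : ℂ) * Complex.I by
      rw [hφ]; push_cast; ring]
    rw [Complex.exp_add, hI]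
  have hAne : Complex.exp (-(φ : ℂ) * Complex.I) ≠ 0 := Complex.exp_ne_zero _
  have hconjA : (starRingEnd ℂ) (Complex.exp (-(φ : ℂ) * Complex.I))
      = Complex.exp ((φ : ℂ) * Complex.I) := by
    rw [← Complex.exp_conj]
    congr 1
    simp
  have hconjB : (starRingEnd ℂ) (Complex.exp ((φ : ℂ) * Complex.I))
      = Complex.exp (-(φ : ℂ) * Complex.I) := by
    rw [← Complex.exp_conj]
    congr 1
    simp
  have hAB : Complex.exp (-(φ : ℂ) * Complex.I) * Complex.exp ((φ : ℂ) * Complex.I) = 1 := by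
    rw [← Complex.exp_add]; ring_nf; exact Complex.exp_zero
  constructor
  · intro h
    obtain ⟨k0, hk0⟩ : ∃ k, g k ≠ 0 := by
      by_contra hc; push_neg at hc; exact hg (funext hc)
    have hjk : ∀ j k, Complex.exp (-(φ : ℂ) * Complex.I) * (f j * (starRingEnd ℂ) (g k)) +
        Complex.exp ((φ : ℂ) * Complex.I) * (g j * (starRingEnd ℂ) (f k)) = 0 := by
      intro j k
      have := congrFun (congrFun h j) k
      simpa [Matrix.vecMulVec_apply] using this
    have hGc : (starRingEnd ℂ) (g k0) ≠ 0 := by simpa using hk0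
    have key : ∀ j, f j * g k0 = f k0 * g j := by
      intro j
      have h1 := hjk j k0
      have h2 := hjk k0 k0
      have e3 : Complex.exp (-(φ : ℂ) * Complex.I) * (starRingEnd ℂ) (g k0) * (f j * g k0)
          = Complex.exp (-(φ : ℂ) * Complex.I) * (starRingEnd ℂ) (g k0) * (f k0 * g j) := by
        linear_combination g k0 * h1 - g j * h2
      exact mul_left_cancel₀ (mul_ne_zero hAne hGc) e3
    set c : ℂ := f k0 / g k0 with hcdef
    have hf : ∀ j, f j = c * g j := by
      intro j
      rw [hcdef, div_mul_eq_mul_div, eq_div_iff hk0, mul_comm (f k0) (g j)]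
      rw [key j]; ring
    have hfc : f k0 = c * g k0 := hf k0
    have h2 := hjk k0 k0
    have hgg : g k0 * (starRingEnd ℂ) (g k0) ≠ 0 := mul_ne_zero hk0 hGc
    have hc0 : Complex.exp (-(φ : ℂ) * Complex.I) * c
        + Complex.exp ((φ : ℂ) * Complex.I) * (starRingEnd ℂ) c = 0 := by
      have e4 : (Complex.exp (-(φ : ℂ) * Complex.I) * c
          + Complex.exp ((φ : ℂ) * Complex.I) * (starRingEnd ℂ) c)
          * (g k0 * (starRingEnd ℂ) (g k0)) = 0 := by
        rw [hfc] at h2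
        rw [_root_.map_mul] at h2
        linear_combination h2
      exact (mul_eq_zero.mp e4).resolve_right hgg
    set z : ℂ := Complex.exp (-(φ : ℂ) * Complex.I) * c with hzdef
    set t0 : ℝ := z.im with ht0
    have hre : z.re = 0 := by
      have h5 : z + (starRingEnd ℂ) z = 0 := by
        rw [hzdef, _root_.map_mul, hconjA]; linear_combination hc0
      rw [Complex.add_conj] at h5
      have h6 : (2 : ℝ) * z.re = 0 := by exact_mod_cast h5
      linarith
    have hz : z = (t0 : ℂ) * Complex.I := by
      rw [ht0, ← Complex.re_add_im z, hre]
      simp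
    have hcval : c = (t0 : ℂ) * Complex.exp (((Real.pi * ν / 2 : ℝ) : ℂ) * Complex.I) := by
      rw [hE]
      calc c = Complex.exp ((φ : ℂ) * Complex.I) * z := by
              rw [hzdef, ← mul_assoc, mul_comm (Complex.exp ((φ : ℂ) * Complex.I)), hAB, one_mul]
        _ = Complex.exp ((φ : ℂ) * Complex.I) * ((t0 : ℂ) * Complex.I) := by rw [hz]
        _ = _ := by ring
    exact ⟨t0, funext fun j => by
      simp only [Pi.smul_apply, smul_eq_mul]; rw [hf j, hcval]⟩
  · rintro ⟨t, rfl⟩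
    ext j k
    simp only [Matrix.add_apply, Matrix.smul_apply, Matrix.vecMulVec_apply, Pi.star_apply,
      Pi.smul_apply, smul_eq_mul, Matrix.zero_apply, Complex.star_def, _root_.map_mul,
      Complex.conj_ofReal, Complex.conj_I, hconjB, hE]
    ring
end

section
/- Kernel/quadratic-form equivalence on the curve Θ(Δ₀,Σ₀) (Lemma 9): Let 0 < ν < 2, φ = (π/2)(ν−1), and let α, β, γ ∈ ℝ satisfy either 0 ≤ α ≤ γ or α < 0 < γ. Let f, g ∈ ℂⁿ and let ζ = (f, g) ∈ ℂ^{2n}. Then the following are equivalent. (i) Either there exists θ ∈ ℂ with ρ(θ,Δ₀) = 0, ρ(θ,Σ₀) ≥ 0 and f = θg; or α ≥ 0 and g = 0 (the θ = ∞ case, which occurs exactly when the curve is unbounded). (ii) For all Hermitian matrices U, V ∈ ℂ^{n×n} with V positive semidefinite, the (real) Hermitian-form value ζ*(Δ₀ ⊗ U + Σ₀ ⊗ V)ζ is ≥ 0. -/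
open Matrix Complex
open scoped Matrix Kronecker ComplexOrder

/-! ### auxiliary lemmas -/

lemma aux_conj_exp (φ : ℝ) :
    (starRingEnd ℂ) (Complex.exp ((φ : ℂ) * Complex.I)) = Complex.exp (-(φ : ℂ) * Complex.I) := by
  rw [← Complex.exp_conj]
  congr 1
  simp [Complex.conj_ofReal]

lemma aux_kron_expand {n : ℕ} (A : Matrix (Fin 2) (Fin 2) ℂ) (U : Matrix (Fin n) (Fin n) ℂ)
    (f g : Fin n → ℂ) :
    star (fun q : Fin 2 × Fin n => ![f, g] q.1 q.2) ⬝ᵥ (A ⊗ₖ U) *ᵥ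
        (fun q : Fin 2 × Fin n => ![f, g] q.1 q.2)
      = A 0 0 * (star f ⬝ᵥ U *ᵥ f) + A 0 1 * (star f ⬝ᵥ U *ᵥ g)
        + A 1 0 * (star g ⬝ᵥ U *ᵥ f) + A 1 1 * (star g ⬝ᵥ U *ᵥ g) := by
  simp only [dotProduct, mulVec, kroneckerMap_apply, Fintype.sum_prod_type, Fin.sum_univ_two,
    Matrix.cons_val_zero, Matrix.cons_val_one, Matrix.head_cons, Pi.star_apply, Finset.mul_sum,
    Finset.sum_mul, RCLike.star_def, mul_add, Finset.sum_add_distrib]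
  simp only [mul_comm, mul_left_comm, mul_assoc]
  ring

lemma aux_S_expand {n : ℕ} (φ α β γ : ℝ) (U V : Matrix (Fin n) (Fin n) ℂ) (f g : Fin n → ℂ) :
    star (fun q : Fin 2 × Fin n => ![f, g] q.1 q.2) ⬝ᵥ
        ((Delta0 φ ⊗ₖ U + Sigma0 φ α β γ ⊗ₖ V)) *ᵥ (fun q : Fin 2 × Fin n => ![f, g] q.1 q.2)
      = Complex.exp ((φ : ℂ) * Complex.I) * (star f ⬝ᵥ U *ᵥ g)
        + Complex.exp (-(φ : ℂ) * Complex.I) * (star g ⬝ᵥ U *ᵥ f)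
        + (α : ℂ) * (star f ⬝ᵥ V *ᵥ f)
        + (β : ℂ) * Complex.exp ((φ : ℂ) * Complex.I) * (star f ⬝ᵥ V *ᵥ g)
        + (β : ℂ) * Complex.exp (-(φ : ℂ) * Complex.I) * (star g ⬝ᵥ V *ᵥ f)
        + (γ : ℂ) * (star g ⬝ᵥ V *ᵥ g) := by
  rw [Matrix.add_mulVec, dotProduct_add, aux_kron_expand, aux_kron_expand]
  simp [Delta0, Sigma0]
  ring

lemma aux_outer_qf {n : ℕ} (v x y : Fin n → ℂ) :
    star x ⬝ᵥ (Matrix.vecMulVec v (star v)) *ᵥ y = star (star v ⬝ᵥ x) * (star v ⬝ᵥ y) := by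
  simp only [Matrix.mulVec, Matrix.vecMulVec_apply, dotProduct, Pi.star_apply, star_sum,
    star_mul', star_star]
  rw [Finset.sum_mul]
  refine Finset.sum_congr rfl fun i _ => ?_
  simp only [mul_assoc, ← Finset.mul_sum]
  ring

lemma aux_outer_posSemidef {n : ℕ} (v : Fin n → ℂ) :
    (Matrix.vecMulVec v (star v)).PosSemidef := by
  apply Matrix.PosSemidef.of_dotProduct_mulVec_nonneg
  · ext i j
    simp [Matrix.conjTranspose_apply, Matrix.vecMulVec_apply, mul_comm]
  · intro x
    rw [aux_outer_qf]
    exact star_mul_self_nonneg _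

lemma aux_qf_stdBasis {n : ℕ} (a b : Fin n) (c : ℂ) (f g : Fin n → ℂ) :
    star f ⬝ᵥ (Matrix.single a b c) *ᵥ g = (starRingEnd ℂ) (f a) * (c * g b) := by
  rw [Matrix.single_mulVec]
  simp [dotProduct, Function.update_apply]

lemma aux_conj_qf {n : ℕ} (U : Matrix (Fin n) (Fin n) ℂ) (hU : U.IsHermitian) (f g : Fin n → ℂ) :
    (starRingEnd ℂ) (star f ⬝ᵥ U *ᵥ g) = star g ⬝ᵥ U *ᵥ f := by
  have h1 : (starRingEnd ℂ) (star f ⬝ᵥ U *ᵥ g) = star (star f ⬝ᵥ U *ᵥ g) := rfl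
  rw [h1, ← Matrix.star_dotProduct, Matrix.star_mulVec, hU.eq,
    ← Matrix.dotProduct_mulVec]

lemma aux_stdBasis_ct {n : ℕ} (a b : Fin n) (c : ℂ) :
    (Matrix.single a b c)ᴴ = Matrix.single b a (star c) := by
  ext i j
  simp only [Matrix.conjTranspose_apply, Matrix.single, Matrix.of_apply]
  by_cases h : a = j ∧ b = i
  · simp [h.1, h.2]
  · rw [if_neg h, if_neg (by tauto), star_zero]

lemma aux_stdBasis_herm {n : ℕ} (a b : Fin n) (c : ℂ) :
    (Matrix.single a b c + Matrix.single b a ((starRingEnd ℂ) c)).IsHermitian := by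
  have : (starRingEnd ℂ) c = star c := rfl
  rw [Matrix.IsHermitian, Matrix.conjTranspose_add, aux_stdBasis_ct, aux_stdBasis_ct, this,
    star_star, add_comm]

lemma aux_conj_exp' (φ : ℝ) :
    (starRingEnd ℂ) (Complex.exp (-(φ : ℂ) * Complex.I)) = Complex.exp ((φ : ℂ) * Complex.I) := by
  rw [← Complex.exp_conj]
  congr 1
  simp [Complex.conj_ofReal]

lemma aux_rho_delta (φ : ℝ) (θ : ℂ) :
    star ![θ, 1] ⬝ᵥ (Delta0 φ) *ᵥ ![θ, 1]
      = (starRingEnd ℂ) θ * Complex.exp ((φ : ℂ) * Complex.I)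
        + θ * Complex.exp (-(φ : ℂ) * Complex.I) := by
  simp [Delta0, dotProduct, Matrix.mulVec, Fin.sum_univ_two]
  ring

lemma aux_rho_sigma (φ α β γ : ℝ) (θ : ℂ) :
    star ![θ, 1] ⬝ᵥ (Sigma0 φ α β γ) *ᵥ ![θ, 1]
      = (α : ℂ) * ((starRingEnd ℂ) θ * θ)
        + (β : ℂ) * ((starRingEnd ℂ) θ * Complex.exp ((φ : ℂ) * Complex.I)
          + θ * Complex.exp (-(φ : ℂ) * Complex.I)) + (γ : ℂ) := by
  simp [Sigma0, dotProduct, Matrix.mulVec, Fin.sum_univ_two]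
  ring

lemma aux_z_of_rho (φ : ℝ) (θ : ℂ) (h : rho θ (Delta0 φ) = 0) :
    (starRingEnd ℂ) θ * Complex.exp ((φ : ℂ) * Complex.I)
      + θ * Complex.exp (-(φ : ℂ) * Complex.I) = 0 := by
  set z := (starRingEnd ℂ) θ * Complex.exp ((φ : ℂ) * Complex.I)
      + θ * Complex.exp (-(φ : ℂ) * Complex.I) with hzdef
  have hconj : (starRingEnd ℂ) z = z := by
    rw [hzdef, map_add, _root_.map_mul, _root_.map_mul, aux_conj_exp, aux_conj_exp', Complex.conj_conj]
    ring
  have him : z.im = 0 := by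
    have := Complex.conj_eq_iff_im.mp hconj
    exact this
  have hre : z.re = 0 := by
    have : rho θ (Delta0 φ) = z.re := by rw [rho, aux_rho_delta]
    rw [← this, h]
  exact Complex.ext hre him

lemma aux_rho_sigma_val (φ α β γ : ℝ) (θ : ℂ)
    (hz : (starRingEnd ℂ) θ * Complex.exp ((φ : ℂ) * Complex.I)
      + θ * Complex.exp (-(φ : ℂ) * Complex.I) = 0) :
    rho θ (Sigma0 φ α β γ) = α * Complex.normSq θ + γ := by
  rw [rho, aux_rho_sigma, hz, mul_zero, add_zero]
  have : (starRingEnd ℂ) θ * θ = (Complex.normSq θ : ℂ) := by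
    rw [mul_comm, Complex.mul_conj]
  rw [this, ← Complex.ofReal_mul, ← Complex.ofReal_add, Complex.ofReal_re]

lemma aux_S_theta {n : ℕ} (φ α β γ : ℝ) (θ : ℂ)
    (hz : (starRingEnd ℂ) θ * Complex.exp ((φ : ℂ) * Complex.I)
      + θ * Complex.exp (-(φ : ℂ) * Complex.I) = 0)
    (U V : Matrix (Fin n) (Fin n) ℂ) (g : Fin n → ℂ) :
    star (fun q : Fin 2 × Fin n => ![θ • g, g] q.1 q.2) ⬝ᵥ
        ((Delta0 φ ⊗ₖ U + Sigma0 φ α β γ ⊗ₖ V)) *ᵥ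
        (fun q : Fin 2 × Fin n => ![θ • g, g] q.1 q.2)
      = ((α * Complex.normSq θ + γ : ℝ) : ℂ) * (star g ⬝ᵥ V *ᵥ g) := by
  rw [aux_S_expand]
  simp only [star_smul, smul_dotProduct, dotProduct_smul, Matrix.mulVec_smul,
    smul_eq_mul, star_def]
  push_cast
  have hns : (Complex.normSq θ : ℂ) = (starRingEnd ℂ) θ * θ := by
    rw [mul_comm, Complex.mul_conj]
  rw [hns]
  linear_combination ((star g ⬝ᵥ U *ᵥ g) + (β : ℂ) * (star g ⬝ᵥ V *ᵥ g)) * hz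

/-- Kernel/quadratic-form equivalence on the curve Θ(Δ₀,Σ₀) (Lemma 9). -/
theorem kernel_quadratic_form_curve {n : ℕ} (ν φ : ℝ)
    (hν : 0 < ν) (hν2 : ν < 2) (hφ : φ = (Real.pi / 2) * (ν - 1))
    (α β γ : ℝ) (hαβγ : (0 ≤ α ∧ α ≤ γ) ∨ (α < 0 ∧ 0 < γ))
    (f g : Fin n → ℂ) (ζ : Fin 2 × Fin n → ℂ)
    (hζ : ζ = fun q => ![f, g] q.1 q.2) :
    ((∃ θ : ℂ, rho θ (Delta0 φ) = 0 ∧ 0 ≤ rho θ (Sigma0 φ α β γ) ∧ f = θ • g) ∨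
      (0 ≤ α ∧ g = 0)) ↔
    (∀ U V : Matrix (Fin n) (Fin n) ℂ, U.IsHermitian → V.IsHermitian → V.PosSemidef →
      0 ≤ (star ζ ⬝ᵥ (Delta0 φ ⊗ₖ U + Sigma0 φ α β γ ⊗ₖ V) *ᵥ ζ).re) := by
  subst hζ
  have hγ0 : 0 ≤ γ := by rcases hαβγ with ⟨h1, h2⟩ | ⟨h1, h2⟩ <;> linarith
  constructor
  · rintro (⟨θ, hD, hS, hf⟩ | ⟨hα, hg⟩) U V hU hV hVpsd
    · have hz := aux_z_of_rho φ θ hD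
      rw [hf, aux_S_theta φ α β γ θ hz U V g]
      have hRv := hVpsd.dotProduct_mulVec_nonneg g
      rw [Complex.nonneg_iff] at hRv
      rw [Complex.mul_re, Complex.ofReal_re, Complex.ofReal_im, zero_mul, sub_zero]
      have hρ : 0 ≤ α * Complex.normSq θ + γ := by
        rw [aux_rho_sigma_val φ α β γ θ hz] at hS; exact hS
      exact mul_nonneg hρ hRv.1
    · subst hg
      rw [aux_S_expand]
      simp only [Matrix.mulVec_zero, dotProduct_zero, star_zero, zero_dotProduct,
        mul_zero, add_zero, zero_add]
      have hRf := hVpsd.dotProduct_mulVec_nonneg f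
      rw [Complex.nonneg_iff] at hRf
      rw [Complex.mul_re, Complex.ofReal_re, Complex.ofReal_im, zero_mul, sub_zero]
      exact mul_nonneg hα hRf.1
  · intro h
    by_cases hg : g = 0
    · by_cases hf : f = 0
      · left
        refine ⟨0, ?_, ?_, by simp [hf]⟩
        · rw [rho, aux_rho_delta]; simp
        · have hz : (starRingEnd ℂ) (0 : ℂ) * Complex.exp ((φ : ℂ) * Complex.I) + (0 : ℂ) * Complex.exp (-(φ : ℂ) * Complex.I) = 0 := by simp
          rw [aux_rho_sigma_val φ α β γ 0 hz]
          simpa using hγ0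
      · right
        refine ⟨?_, hg⟩
        have hpsd := aux_outer_posSemidef f
        have h1 := h 0 (Matrix.vecMulVec f (star f)) Matrix.isHermitian_zero hpsd.1 hpsd
        subst hg
        rw [aux_S_expand] at h1
        simp only [Matrix.mulVec_zero, dotProduct_zero, star_zero, zero_dotProduct,
          mul_zero, add_zero, zero_add] at h1
        rw [aux_outer_qf] at h1
        set s := star f ⬝ᵥ f with hs
        have hsne : s ≠ 0 := fun hc => hf (dotProduct_star_self_eq_zero.mp hc)
        have hss : star s * s = (Complex.normSq s : ℂ) := by
          rw [RCLike.star_def, mul_comm, Complex.mul_conj]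
        rw [hss] at h1
        rw [Complex.mul_re, Complex.ofReal_re, Complex.ofReal_im, zero_mul, sub_zero,
          Complex.ofReal_re] at h1
        have hpos : 0 < Complex.normSq s := Complex.normSq_pos.mpr hsne
        nlinarith
    · obtain ⟨b0, hb0⟩ := Function.ne_iff.mp hg
      have he'ne : Complex.exp (-(φ : ℂ) * Complex.I) ≠ 0 := Complex.exp_ne_zero _
      have hgb0c : (starRingEnd ℂ) (g b0) ≠ 0 := by
        simpa using hb0
      -- step 1: the U-part vanishes for every Hermitian U
      have key : ∀ U : Matrix (Fin n) (Fin n) ℂ, U.IsHermitian →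
          Complex.exp ((φ : ℂ) * Complex.I) * (star f ⬝ᵥ U *ᵥ g)
            + Complex.exp (-(φ : ℂ) * Complex.I) * (star g ⬝ᵥ U *ᵥ f) = 0 := by
        intro U hU
        have h1 := h U 0 hU Matrix.isHermitian_zero Matrix.PosSemidef.zero
        have h2 := h (-U) 0 hU.neg Matrix.isHermitian_zero Matrix.PosSemidef.zero
        rw [aux_S_expand] at h1 h2
        simp only [Matrix.mulVec_zero, Matrix.zero_mulVec, dotProduct_zero, mul_zero,
          add_zero, Matrix.neg_mulVec, dotProduct_neg, mul_neg, neg_add_rev] at h1 h2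
        set w := Complex.exp ((φ : ℂ) * Complex.I) * (star f ⬝ᵥ U *ᵥ g)
          + Complex.exp (-(φ : ℂ) * Complex.I) * (star g ⬝ᵥ U *ᵥ f) with hw
        have hwre : w.re = 0 := by
          rw [hw] at h1 ⊢
          simp only [Complex.add_re, Complex.neg_re] at h1 h2 ⊢
          linarith
        have hwconj : (starRingEnd ℂ) w = w := by
          rw [hw, map_add, _root_.map_mul, _root_.map_mul, aux_conj_exp, aux_conj_exp',
            aux_conj_qf U hU, aux_conj_qf U hU]
          ring
        have hwim : w.im = 0 := Complex.conj_eq_iff_im.mp hwconj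
        exact Complex.ext hwre hwim
      -- entrywise relation
      have rel : ∀ a b : Fin n,
          Complex.exp ((φ : ℂ) * Complex.I) * ((starRingEnd ℂ) (f a) * g b)
            + Complex.exp (-(φ : ℂ) * Complex.I) * (f b * (starRingEnd ℂ) (g a)) = 0 := by
        intro a b
        have hH1 : (Matrix.single a b (1 : ℂ)
            + Matrix.single b a (1 : ℂ)).IsHermitian := by
          have := aux_stdBasis_herm a b (1 : ℂ)
          simpa using this
        have hH2 : (Matrix.single a b Complex.I
            + Matrix.single b a (-Complex.I)).IsHermitian := by
          have := aux_stdBasis_herm a b Complex.I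
          simpa [Complex.conj_I] using this
        have h1 := key _ hH1
        have h2 := key _ hH2
        simp only [Matrix.add_mulVec, dotProduct_add, aux_qf_stdBasis] at h1 h2
        have hX : Complex.I * (Complex.exp ((φ : ℂ) * Complex.I)
              * ((starRingEnd ℂ) (f a) * g b - (starRingEnd ℂ) (f b) * g a)
            + Complex.exp (-(φ : ℂ) * Complex.I)
              * ((starRingEnd ℂ) (g a) * f b - (starRingEnd ℂ) (g b) * f a)) = 0 := by
          linear_combination h2
        have hX0 := (mul_eq_zero.mp hX).resolve_left Complex.I_ne_zero
        linear_combination h1 / 2 + hX0 / 2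
      set θ : ℂ := -(Complex.exp ((φ : ℂ) * Complex.I) * (starRingEnd ℂ) (f b0)) / (Complex.exp (-(φ : ℂ) * Complex.I) * (starRingEnd ℂ) (g b0)) with hθ
      have hden : Complex.exp (-(φ : ℂ) * Complex.I) * (starRingEnd ℂ) (g b0) ≠ 0 := mul_ne_zero he'ne hgb0c
      have hfθ : f = θ • g := by
        funext j
        have hr := rel b0 j
        rw [Pi.smul_apply, smul_eq_mul, hθ, div_mul_eq_mul_div, eq_div_iff hden]
        linear_combination hr
      have hfb0 : f b0 = θ * g b0 := by rw [hfθ]; rfl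
      have hz : (starRingEnd ℂ) θ * Complex.exp ((φ : ℂ) * Complex.I)
          + θ * Complex.exp (-(φ : ℂ) * Complex.I) = 0 := by
        have h0 := rel b0 b0
        rw [hfb0, _root_.map_mul] at h0
        have hfac : ((starRingEnd ℂ) θ * Complex.exp ((φ : ℂ) * Complex.I) + θ * Complex.exp (-(φ : ℂ) * Complex.I)) * ((starRingEnd ℂ) (g b0) * g b0) = 0 := by
          linear_combination h0
        rcases mul_eq_zero.mp hfac with h' | h'
        · exact h'
        · exact absurd h' (mul_ne_zero hgb0c hb0)
      left
      refine ⟨θ, ?_, ?_, hfθ⟩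
      · rw [rho, aux_rho_delta, hz]
        simp
      · have hpsd := aux_outer_posSemidef g
        have h1 := h 0 (Matrix.vecMulVec g (star g)) Matrix.isHermitian_zero hpsd.1 hpsd
        rw [hfθ] at h1
        rw [aux_S_theta φ α β γ θ hz 0 (Matrix.vecMulVec g (star g)) g] at h1
        rw [aux_outer_qf] at h1
        set s := star g ⬝ᵥ g with hs
        have hsne : s ≠ 0 := fun hc => hg (dotProduct_star_self_eq_zero.mp hc)
        have hss : star s * s = (Complex.normSq s : ℂ) := by
          rw [RCLike.star_def, mul_comm, Complex.mul_conj]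
        rw [hss, ← Complex.ofReal_mul] at h1
        rw [Complex.ofReal_re] at h1
        have hpos : 0 < Complex.normSq s := Complex.normSq_pos.mpr hsne
        rw [aux_rho_sigma_val φ α β γ θ hz]
        nlinarith
end
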